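/- arXiv:1709.01962 — 8 statements merged into one kernel-verified Lean document; each statement's English description precedes it below -/
import Mathlib

section
/- Under the saw map setup, the set Σ is a chaotic invariant set for T. -/
/-- `T` is affine (linear) on the segment `[a, b]`. -/
def AffOn (T : ℝ → ℝ) (a b : ℝ) : Prop :=
  ∃ m c : ℝ, ∀ x ∈ Set.Icc a b, T x = m * x + c

/-- The "saw map" setup: sequences `q, r, p`, the map `T`, fixed points `e k ∈ (q (k+1), r k)`
and `ehat k ∈ (r k, q k)`, and the index `kstar`, subject to all standing assumptions. -/
structure SawMapSetup where
  q : ℕ → ℝ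
  r : ℕ → ℝ
  p : ℕ → ℝ
  T : ℝ → ℝ
  e : ℕ → ℝ
  ehat : ℕ → ℝ
  kstar : ℕ
  hq_pos : ∀ k, 1 ≤ k → 0 < q k
  hr_pos : ∀ k, 0 < r k
  hq1r0 : q 1 < r 0
  hrq : ∀ k, 1 ≤ k → r k < q k
  hqr : ∀ k, 1 ≤ k → q (k + 1) < r k
  hq_lim : Filter.Tendsto q Filter.atTop (nhds 0)
  hr_lim : Filter.Tendsto r Filter.atTop (nhds 0)
  hp_pos : ∀ k, 0 < p k
  hp_dec : ∀ k, p (k + 1) < p k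
  hp0r0 : p 0 < r 0
  hpr : ∀ k, 1 ≤ k → r k < p k
  hT0 : T 0 = 0
  hTq : ∀ k, 1 ≤ k → T (q k) = 0
  hTr : ∀ k, T (r k) = p k
  haff0 : AffOn T (q 1) (r 0)
  haff1 : ∀ k, 1 ≤ k → AffOn T (q (k + 1)) (r k)
  haff2 : ∀ k, 1 ≤ k → AffOn T (r k) (q k)
  hTJ : Set.MapsTo T (Set.Icc 0 (r 0)) (Set.Icc 0 (r 0))
  halpha1 : ∀ k, 1 ≤ k → 1 < p k / (r k - q (k + 1))
  he_mem : ∀ k, 1 ≤ k → e k ∈ Set.Ioo (q (k + 1)) (r k)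
  he_fix : ∀ k, 1 ≤ k → T (e k) = e k
  he_uniq : ∀ k, 1 ≤ k → ∀ x ∈ Set.Ioo (q (k + 1)) (r k), T x = x → x = e k
  hehat_mem : ∀ k, 1 ≤ k → ehat k ∈ Set.Ioo (r k) (q k)
  hehat_fix : ∀ k, 1 ≤ k → T (ehat k) = ehat k
  hehat_uniq : ∀ k, 1 ≤ k → ∀ x ∈ Set.Ioo (r k) (q k), T x = x → x = ehat k
  halpha_mono : ∀ k, p k / (r k - q (k + 1)) < p (k + 1) / (r (k + 1) - q (k + 2))
  hbeta_mono : ∀ k, 1 ≤ k → p k / (q k - r k) < p (k + 1) / (q (k + 1) - r (k + 1))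
  hkstar : 1 ≤ kstar
  hp_e_big : ∀ k, kstar + 1 ≤ k → e (k - 1) < p k
  hp_e_small : 2 ≤ kstar → ∀ k, 2 ≤ k → k ≤ kstar → p k < e (k - 1)
  htech : ∀ k, 1 ≤ k → k < kstar → p k < q k + e k / (p (k - 1) / (r (k - 1) - q k))

namespace SawMapSetup

variable (S : SawMapSetup)

/-- Absolute value of the slope of `T` on `[q (k+1), r k]`. -/
noncomputable def alpha (k : ℕ) : ℝ := S.p k / (S.r k - S.q (k + 1))

/-- Absolute value of the slope of `T` on `[r k, q k]`. -/
noncomputable def beta (k : ℕ) : ℝ := S.p k / (S.q k - S.r k)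

/-- The invariant segment `J* = [0, p kstar]`. -/
def Jstar : Set ℝ := Set.Icc 0 (S.p S.kstar)

/-- The segment `J_k = [e k, p k]`. -/
def Jk (k : ℕ) : Set ℝ := Set.Icc (S.e k) (S.p k)

/-- The segment `G_k = [T (p k), p k]`. -/
def Gk (k : ℕ) : Set ℝ := Set.Icc (S.T (S.p k)) (S.p k)

/-- The set `Ω` of points of `J*` that are eventually mapped to `0`. -/
def Omega : Set ℝ := {x | x ∈ S.Jstar ∧ ∃ n, 1 ≤ n ∧ S.T^[n] x = 0}

/-- The set `Σ`, the closure of `Ω`. -/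
def Sig : Set ℝ := closure S.Omega

end SawMapSetup

open Set

namespace SawMapSetup

variable (S : SawMapSetup)

/-! ### Basic order facts -/

lemma r_succ_lt (k : ℕ) : S.r (k + 1) < S.r k := by
  rcases Nat.eq_zero_or_pos k with rfl | h
  · exact (S.hrq 1 le_rfl).trans S.hq1r0
  · exact (S.hrq (k + 1) (by omega)).trans (S.hqr k h)

lemma r_anti : ∀ {j k : ℕ}, j ≤ k → S.r k ≤ S.r j := by
  intro j k h
  exact (antitone_nat_of_succ_le (fun n => (S.r_succ_lt n).le)) h

lemma p_anti : ∀ {j k : ℕ}, j ≤ k → S.p k ≤ S.p j := by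
  intro j k h
  exact (antitone_nat_of_succ_le (fun n => (S.hp_dec n).le)) h

lemma q_succ_lt (k : ℕ) (hk : 1 ≤ k) : S.q (k + 1) < S.q k :=
  (S.hqr k hk).trans (S.hrq k hk)

lemma q_anti : ∀ j k : ℕ, 1 ≤ j → j ≤ k → S.q k ≤ S.q j := by
  intro j k hj h
  induction k with
  | zero => omega
  | succ n ih =>
    rcases Nat.lt_or_ge j (n + 1) with h' | h'
    · exact le_trans (S.q_succ_lt n (by omega)).le (ih (by omega))
    · have : j = n + 1 := by omega
      subst this; rfl

lemma pstar_pos : 0 < S.p S.kstar := S.hp_pos _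

lemma pstar_lt_r0 : S.p S.kstar < S.r 0 :=
  lt_of_le_of_lt (S.p_anti (Nat.zero_le _)) S.hp0r0

lemma q_le_r0 (k : ℕ) (hk : 1 ≤ k) : S.q k ≤ S.r 0 :=
  le_trans (S.q_anti 1 k le_rfl hk) S.hq1r0.le

/-! ### Affine helpers -/

lemma image_affine_pos {m c a b : ℝ} (hm : 0 < m) (hab : a ≤ b) :
    (fun t => m * t + c) '' Set.Icc a b = Set.Icc (m * a + c) (m * b + c) := by
  ext y
  simp only [Set.mem_image, Set.mem_Icc]
  constructor
  · rintro ⟨t, ⟨h1, h2⟩, rfl⟩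
    constructor <;> nlinarith
  · rintro ⟨h1, h2⟩
    refine ⟨(y - c) / m, ⟨?_, ?_⟩, by field_simp; ring⟩
    · rw [le_div_iff₀ hm]; nlinarith
    · rw [div_le_iff₀ hm]; nlinarith

lemma image_affine_neg {m c a b : ℝ} (hm : m < 0) (hab : a ≤ b) :
    (fun t => m * t + c) '' Set.Icc a b = Set.Icc (m * b + c) (m * a + c) := by
  ext y
  simp only [Set.mem_image, Set.mem_Icc]
  constructor
  · rintro ⟨t, ⟨h1, h2⟩, rfl⟩
    constructor <;> nlinarith
  · rintro ⟨h1, h2⟩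
    refine ⟨(y - c) / m, ⟨?_, ?_⟩, by field_simp [hm.ne]; ring⟩
    · rw [le_div_iff_of_neg hm]; nlinarith
    · rw [div_le_iff_of_neg hm]; nlinarith

lemma Icc_eq_Icc_endpoints {u v w z : ℝ} (h1 : u ≤ v) (h2 : w ≤ z)
    (h : Set.Icc u v = Set.Icc w z) : u = w ∧ v = z := by
  have hu : u ∈ Set.Icc w z := h ▸ (Set.mem_Icc.2 ⟨le_rfl, h1⟩)
  have hv : v ∈ Set.Icc w z := h ▸ (Set.mem_Icc.2 ⟨h1, le_rfl⟩)
  have hw : w ∈ Set.Icc u v := h.symm ▸ (Set.mem_Icc.2 ⟨le_rfl, h2⟩)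
  have hz : z ∈ Set.Icc u v := h.symm ▸ (Set.mem_Icc.2 ⟨h2, le_rfl⟩)
  exact ⟨le_antisymm hw.1 hu.1, le_antisymm hv.2 hz.2⟩

/-! ### The `Onto` predicate -/

/-- `T^[n]` is affine on `[a,b]` with image exactly `[0, L]`. -/
def Onto (n : ℕ) (a b L : ℝ) : Prop :=
  a < b ∧ 0 < L ∧ ∃ m c : ℝ, m ≠ 0 ∧ (∀ t ∈ Set.Icc a b, S.T^[n] t = m * t + c) ∧
    S.T^[n] '' Set.Icc a b = Set.Icc 0 L

end SawMapSetup

namespace SawMapSetup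

variable (S : SawMapSetup)

lemma onto_one {u v v' : ℝ} (huv : u < v) (hvv' : v ≤ v') (haff : AffOn S.T u v')
    (hu0 : S.T u = 0) (hv : 0 < S.T v) : S.Onto 1 u v (S.T v) := by
  obtain ⟨m, c, hmc⟩ := haff
  have hum : u ∈ Set.Icc u v' := ⟨le_rfl, huv.le.trans hvv'⟩
  have hvm : v ∈ Set.Icc u v' := ⟨huv.le, hvv'⟩
  have h1 : m * u + c = 0 := by rw [← hmc u hum]; exact hu0
  have h2 : m * v + c = S.T v := (hmc v hvm).symm
  have hm : 0 < m := by nlinarith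
  have haff' : ∀ t ∈ Set.Icc u v, S.T^[1] t = m * t + c := by
    intro t ht
    rw [Function.iterate_one]
    exact hmc t ⟨ht.1, ht.2.trans hvv'⟩
  refine ⟨huv, hv, m, c, hm.ne', haff', ?_⟩
  rw [Set.image_congr haff', image_affine_pos hm huv.le, h1, h2]

lemma onto_left {n : ℕ} {a b m c : ℝ} (hab : a < b)
    (hsub : Set.Icc a b ⊆ Set.Icc 0 (S.r 0)) (hm : m ≠ 0)
    (haff : ∀ t ∈ Set.Icc a b, S.T^[n] t = m * t + c) (hb0 : S.T^[n] b = 0) :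
    S.Onto n a b (S.T^[n] a) := by
  have hmaps := S.hTJ.iterate n
  have hTa : S.T^[n] a = m * a + c := haff a ⟨le_rfl, hab.le⟩
  have hTb : m * b + c = 0 := by rw [← haff b ⟨hab.le, le_rfl⟩]; exact hb0
  have hTa0 : 0 ≤ S.T^[n] a := (hmaps (hsub ⟨le_rfl, hab.le⟩)).1
  have hmneg : m < 0 := by
    rcases hm.lt_or_gt with h | h
    · exact h
    · exfalso; nlinarith
  have hL : 0 < S.T^[n] a := by rw [hTa]; nlinarith
  refine ⟨hab, hL, m, c, hm, haff, ?_⟩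
  rw [Set.image_congr haff, image_affine_neg hmneg hab.le, hTb, hTa]

lemma onto_right {n : ℕ} {a b m c : ℝ} (hab : a < b)
    (hsub : Set.Icc a b ⊆ Set.Icc 0 (S.r 0)) (hm : m ≠ 0)
    (haff : ∀ t ∈ Set.Icc a b, S.T^[n] t = m * t + c) (ha0 : S.T^[n] a = 0) :
    S.Onto n a b (S.T^[n] b) := by
  have hmaps := S.hTJ.iterate n
  have hTb : S.T^[n] b = m * b + c := haff b ⟨hab.le, le_rfl⟩
  have hTa : m * a + c = 0 := by rw [← haff a ⟨le_rfl, hab.le⟩]; exact ha0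
  have hTb0 : 0 ≤ S.T^[n] b := (hmaps (hsub ⟨hab.le, le_rfl⟩)).1
  have hmpos : 0 < m := by
    rcases hm.lt_or_gt with h | h
    · exfalso; nlinarith
    · exact h
  have hL : 0 < S.T^[n] b := by rw [hTb]; nlinarith
  refine ⟨hab, hL, m, c, hm, haff, ?_⟩
  rw [Set.image_congr haff, image_affine_pos hmpos hab.le, hTa, hTb]

lemma onto_surj {n : ℕ} {a b L z : ℝ} (h : S.Onto n a b L) (hz : z ∈ Set.Icc 0 L) :
    ∃ y ∈ Set.Icc a b, S.T^[n] y = z := by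
  obtain ⟨-, -, m, c, -, -, him⟩ := h
  rw [← him] at hz
  obtain ⟨y, hy, hTy⟩ := hz
  exact ⟨y, hy, hTy⟩

lemma onto_comp {n n' : ℕ} {a b L a' b' L' : ℝ} (h1 : S.Onto n a b L)
    (h2 : S.Onto n' a' b' L') (hsub : Set.Icc a' b' ⊆ Set.Icc 0 L) :
    ∃ a'' b'', Set.Icc a'' b'' ⊆ Set.Icc a b ∧
      S.T^[n] '' Set.Icc a'' b'' = Set.Icc a' b' ∧
      (b'' - a'') * L = (b' - a') * (b - a) ∧ S.Onto (n + n') a'' b'' L' := by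
  obtain ⟨hab, hL, m, c, hm0, haff, him⟩ := h1
  obtain ⟨ha'b', hL', m', c', hm0', haff', him'⟩ := h2
  have ha'0 : 0 ≤ a' := (hsub ⟨le_rfl, ha'b'.le⟩).1
  have hb'L : b' ≤ L := (hsub ⟨ha'b'.le, le_rfl⟩).2
  have hiter : ∀ t : ℝ, S.T^[n + n'] t = S.T^[n'] (S.T^[n] t) := by
    intro t; rw [add_comm]; exact Function.iterate_add_apply _ _ _ _
  have hcomp : S.T^[n + n'] = S.T^[n'] ∘ S.T^[n] := by
    rw [add_comm]; exact Function.iterate_add _ _ _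
  have himg_eq : S.T^[n] '' Set.Icc a b = (fun t => m * t + c) '' Set.Icc a b :=
    Set.image_congr haff
  rcases hm0.lt_or_gt with hm | hm
  · -- m < 0 : take a'' = (b'-c)/m, b'' = (a'-c)/m
    have him2 : Set.Icc (m * b + c) (m * a + c) = Set.Icc 0 L := by
      rw [← image_affine_neg hm hab.le, ← himg_eq, him]
    obtain ⟨he1, he2⟩ := Icc_eq_Icc_endpoints (by nlinarith) hL.le him2
    have hA : m * ((b' - c) / m) + c = b' := by field_simp; ring
    have hB : m * ((a' - c) / m) + c = a' := by field_simp; ring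
    set A : ℝ := (b' - c) / m with hAdef
    set B : ℝ := (a' - c) / m with hBdef
    have hAB : A < B := by
      rcases lt_or_ge A B with h | h
      · exact h
      · exfalso
        have := mul_le_mul_of_nonpos_left h hm.le
        nlinarith
    have hmono : ∀ t ∈ Set.Icc A B, a' ≤ m * t + c ∧ m * t + c ≤ b' := by
      intro t ⟨ht1, ht2⟩
      have k1 := mul_le_mul_of_nonpos_left ht1 hm.le
      have k2 := mul_le_mul_of_nonpos_left ht2 hm.le
      constructor <;> nlinarith
    have hsubab : Set.Icc A B ⊆ Set.Icc a b := by
      intro t ht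
      obtain ⟨k1, k2⟩ := hmono t ht
      constructor <;> nlinarith [ht.1, ht.2]
    refine ⟨A, B, hsubab, ?_, ?_, ?_⟩
    · rw [Set.image_congr (fun t ht => haff t (hsubab ht)), image_affine_neg hm hAB.le,
        hA, hB]
    · have h3 : m * (B - A) = a' - b' := by linear_combination hB - hA
      have h4 : m * (a - b) = L := by linear_combination he2 - he1
      linear_combination (a - b) * h3 - (B - A) * h4
    · have hmapsto : ∀ t ∈ Set.Icc A B, m * t + c ∈ Set.Icc a' b' := fun t ht =>
        ⟨(hmono t ht).1, (hmono t ht).2⟩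
      refine ⟨hAB, hL', m' * m, m' * c + c', mul_ne_zero hm0' hm0, ?_, ?_⟩
      · intro t ht
        rw [hiter t, haff t (hsubab ht), haff' _ (hmapsto t ht)]
        ring
      · rw [hcomp, Set.image_comp, Set.image_congr (fun t ht => haff t (hsubab ht)),
          image_affine_neg hm hAB.le, hA, hB, him']
  · -- 0 < m : take a'' = (a'-c)/m, b'' = (b'-c)/m
    have him2 : Set.Icc (m * a + c) (m * b + c) = Set.Icc 0 L := by
      rw [← image_affine_pos hm hab.le, ← himg_eq, him]
    obtain ⟨he1, he2⟩ := Icc_eq_Icc_endpoints (by nlinarith) hL.le him2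
    have hA : m * ((a' - c) / m) + c = a' := by field_simp; ring
    have hB : m * ((b' - c) / m) + c = b' := by field_simp; ring
    set A : ℝ := (a' - c) / m with hAdef
    set B : ℝ := (b' - c) / m with hBdef
    have hAB : A < B := by
      rcases lt_or_ge A B with h | h
      · exact h
      · exfalso
        have := mul_le_mul_of_nonneg_left h hm.le
        nlinarith
    have hmono : ∀ t ∈ Set.Icc A B, a' ≤ m * t + c ∧ m * t + c ≤ b' := by
      intro t ⟨ht1, ht2⟩
      have k1 := mul_le_mul_of_nonneg_left ht1 hm.le
      have k2 := mul_le_mul_of_nonneg_left ht2 hm.le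
      constructor <;> nlinarith
    have hsubab : Set.Icc A B ⊆ Set.Icc a b := by
      intro t ht
      obtain ⟨k1, k2⟩ := hmono t ht
      constructor <;> nlinarith [ht.1, ht.2]
    refine ⟨A, B, hsubab, ?_, ?_, ?_⟩
    · rw [Set.image_congr (fun t ht => haff t (hsubab ht)), image_affine_pos hm hAB.le,
        hA, hB]
    · have h3 : m * (B - A) = b' - a' := by linear_combination hB - hA
      have h4 : m * (b - a) = L := by linear_combination he2 - he1
      linear_combination (b - a) * h3 - (B - A) * h4
    · have hmapsto : ∀ t ∈ Set.Icc A B, m * t + c ∈ Set.Icc a' b' := fun t ht =>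
        ⟨(hmono t ht).1, (hmono t ht).2⟩
      refine ⟨hAB, hL', m' * m, m' * c + c', mul_ne_zero hm0' hm0, ?_, ?_⟩
      · intro t ht
        rw [hiter t, haff t (hsubab ht), haff' _ (hmapsto t ht)]
        ring
      · rw [hcomp, Set.image_comp, Set.image_congr (fun t ht => haff t (hsubab ht)),
          image_affine_pos hm hAB.le, hA, hB, him']

end SawMapSetup

namespace SawMapSetup

variable (S : SawMapSetup)

/-- Every point of `(0, r 0]` lies in one of the affine pieces. -/
lemma piece (x : ℝ) (hx0 : 0 < x) (hxr : x ≤ S.r 0) :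
    (∃ k, 1 ≤ k ∧ S.q (k + 1) ≤ x ∧ x ≤ S.r k) ∨
    (∃ k, 1 ≤ k ∧ S.r k ≤ x ∧ x ≤ S.q k) ∨ S.q 1 ≤ x := by
  by_cases h1 : S.q 1 ≤ x
  · right; right; exact h1
  push_neg at h1
  have hex : ∃ k, S.q (k + 1) < x := by
    have hev := S.hq_lim.eventually (gt_mem_nhds hx0)
    obtain ⟨N, hN⟩ := Filter.eventually_atTop.1 hev
    exact ⟨N, hN (N + 1) (by omega)⟩
  let k := Nat.find hex
  have hk1 : S.q (k + 1) < x := Nat.find_spec hex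
  have hk0 : 1 ≤ k := by
    by_contra h
    have : k = 0 := by omega
    rw [this] at hk1
    linarith
  have hk2 : x ≤ S.q k := by
    have hmin := Nat.find_min hex (show k - 1 < k by omega)
    have : (k - 1) + 1 = k := by omega
    rw [this] at hmin
    linarith [not_lt.1 hmin]
  rcases le_or_gt x (S.r k) with h | h
  · exact Or.inl ⟨k, hk0, hk1.le, h⟩
  · exact Or.inr (Or.inl ⟨k, hk0, h.le, hk2⟩)

/-- There is an affine piece immediately to the left of any `x ∈ (0, r 0]`. -/
lemma pieceL (x : ℝ) (hx0 : 0 < x) (hxr : x ≤ S.r 0) :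
    ∃ u m c, 0 ≤ u ∧ u < x ∧ (∀ t ∈ Set.Icc u x, S.T t = m * t + c) ∧ m ≠ 0 := by
  have key : ∀ U V : ℝ, U < x → x ≤ V → AffOn S.T U V → S.T U ≠ S.T V → 0 ≤ U →
      ∃ u m c, 0 ≤ u ∧ u < x ∧ (∀ t ∈ Set.Icc u x, S.T t = m * t + c) ∧ m ≠ 0 := by
    intro U V hUx hxV ⟨m, c, hmc⟩ hne hU0
    refine ⟨U, m, c, hU0, hUx, fun t ht => hmc t ⟨ht.1, ht.2.trans hxV⟩, ?_⟩
    intro hm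
    apply hne
    rw [hmc U ⟨le_rfl, hUx.le.trans hxV⟩, hmc V ⟨hUx.le.trans hxV, le_rfl⟩, hm]
    ring
  rcases S.piece x hx0 hxr with ⟨k, hk, h1, h2⟩ | ⟨k, hk, h1, h2⟩ | h1
  · rcases h1.lt_or_eq with h | h
    · exact key _ _ h h2 (S.haff1 k hk) (by rw [S.hTq (k+1) (by omega), S.hTr k]; exact (S.hp_pos k).ne) (S.hq_pos (k+1) (by omega)).le
    · refine key (S.r (k+1)) (S.q (k+1)) ?_ h.ge (S.haff2 (k+1) (by omega)) ?_ (S.hr_pos (k+1)).le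
      · rw [← h]; exact S.hrq (k+1) (by omega)
      · rw [S.hTq (k+1) (by omega), S.hTr (k+1)]; exact (S.hp_pos (k+1)).ne'
  · rcases h1.lt_or_eq with h | h
    · exact key _ _ h h2 (S.haff2 k hk) (by rw [S.hTq k hk, S.hTr k]; exact (S.hp_pos k).ne') (S.hr_pos k).le
    · refine key (S.q (k+1)) (S.r k) ?_ h.ge (S.haff1 k hk) ?_ (S.hq_pos (k+1) (by omega)).le
      · rw [← h]; exact S.hqr k hk
      · rw [S.hTq (k+1) (by omega), S.hTr k]; exact (S.hp_pos k).ne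
  · rcases h1.lt_or_eq with h | h
    · exact key _ _ h hxr S.haff0 (by rw [S.hTq 1 le_rfl, S.hTr 0]; exact (S.hp_pos 0).ne) (S.hq_pos 1 le_rfl).le
    · refine key (S.r 1) (S.q 1) ?_ h.ge (S.haff2 1 le_rfl) ?_ (S.hr_pos 1).le
      · rw [← h]; exact S.hrq 1 le_rfl
      · rw [S.hTq 1 le_rfl, S.hTr 1]; exact (S.hp_pos 1).ne'

/-- There is an affine piece immediately to the right of any `x ∈ (0, r 0)`. -/
lemma pieceR (x : ℝ) (hx0 : 0 < x) (hxr : x < S.r 0) :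
    ∃ v m c, x < v ∧ v ≤ S.r 0 ∧ (∀ t ∈ Set.Icc x v, S.T t = m * t + c) ∧ m ≠ 0 := by
  have key : ∀ U V : ℝ, U ≤ x → x < V → V ≤ S.r 0 → AffOn S.T U V → S.T U ≠ S.T V →
      ∃ v m c, x < v ∧ v ≤ S.r 0 ∧ (∀ t ∈ Set.Icc x v, S.T t = m * t + c) ∧ m ≠ 0 := by
    intro U V hUx hxV hVr ⟨m, c, hmc⟩ hne
    refine ⟨V, m, c, hxV, hVr, fun t ht => hmc t ⟨hUx.trans ht.1, ht.2⟩, ?_⟩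
    intro hm
    apply hne
    rw [hmc U ⟨le_rfl, hUx.trans hxV.le⟩, hmc V ⟨hUx.trans hxV.le, le_rfl⟩, hm]
    ring
  rcases S.piece x hx0 hxr.le with ⟨k, hk, h1, h2⟩ | ⟨k, hk, h1, h2⟩ | h1
  · rcases h2.lt_or_eq with h | h
    · exact key _ _ h1 h (S.r_anti (Nat.zero_le k)) (S.haff1 k hk)
        (by rw [S.hTq (k+1) (by omega), S.hTr k]; exact (S.hp_pos k).ne)
    · refine key (S.r k) (S.q k) (le_of_eq h.symm) ?_ (S.q_le_r0 k hk) (S.haff2 k hk) ?_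
      · rw [h]; exact S.hrq k hk
      · rw [S.hTq k hk, S.hTr k]; exact (S.hp_pos k).ne'
  · rcases h2.lt_or_eq with h | h
    · exact key _ _ h1 h (S.q_le_r0 k hk) (S.haff2 k hk)
        (by rw [S.hTq k hk, S.hTr k]; exact (S.hp_pos k).ne')
    · rcases Nat.lt_or_ge k 2 with hk2 | hk2
      · have hk1 : k = 1 := by omega
        subst hk1
        refine key (S.q 1) (S.r 0) (le_of_eq h.symm) hxr le_rfl S.haff0 ?_
        rw [S.hTq 1 le_rfl, S.hTr 0]; exact (S.hp_pos 0).ne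
      · have hk1 : (k - 1) + 1 = k := by omega
        refine key (S.q k) (S.r (k-1)) (le_of_eq h.symm) ?_ (S.r_anti (Nat.zero_le _)) ?_ ?_
        · have hh := S.hqr (k-1) (by omega)
          rw [hk1] at hh
          rw [h]; exact hh
        · have hh := S.haff1 (k-1) (by omega)
          rw [hk1] at hh
          exact hh
        · rw [S.hTq k hk, S.hTr (k-1)]; exact (S.hp_pos (k-1)).ne
  · exact key _ _ h1 hxr le_rfl S.haff0
      (by rw [S.hTq 1 le_rfl, S.hTr 0]; exact (S.hp_pos 0).ne)

/-- On an affine piece the value is at most the max of the endpoint values. -/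
lemma affOn_le_max {u v x : ℝ} (h : AffOn S.T u v) (hx : x ∈ Set.Icc u v) :
    S.T x ≤ max (S.T u) (S.T v) := by
  obtain ⟨m, c, hmc⟩ := h
  have huv : u ≤ v := hx.1.trans hx.2
  rw [hmc x hx, hmc u ⟨le_rfl, huv⟩, hmc v ⟨huv, le_rfl⟩]
  rcases le_or_gt 0 m with hm | hm
  · exact le_max_of_le_right (by nlinarith [hx.2])
  · exact le_max_of_le_left (by nlinarith [hx.1])

lemma T_le_p0 (x : ℝ) (hx : x ∈ Set.Icc 0 (S.r 0)) : S.T x ≤ S.p 0 := by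
  rcases hx.1.eq_or_lt with h | h
  · rw [← h, S.hT0]; exact (S.hp_pos 0).le
  rcases S.piece x h hx.2 with ⟨k, hk, h1, h2⟩ | ⟨k, hk, h1, h2⟩ | h1
  · have := S.affOn_le_max (S.haff1 k hk) ⟨h1, h2⟩
    rw [S.hTq (k+1) (by omega), S.hTr k] at this
    calc S.T x ≤ max 0 (S.p k) := this
      _ = S.p k := max_eq_right (S.hp_pos k).le
      _ ≤ S.p 0 := S.p_anti (Nat.zero_le k)
  · have := S.affOn_le_max (S.haff2 k hk) ⟨h1, h2⟩
    rw [S.hTq k hk, S.hTr k] at this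
    calc S.T x ≤ max (S.p k) 0 := this
      _ = S.p k := max_eq_left (S.hp_pos k).le
      _ ≤ S.p 0 := S.p_anti (Nat.zero_le k)
  · have := S.affOn_le_max S.haff0 ⟨h1, hx.2⟩
    rw [S.hTq 1 le_rfl, S.hTr 0] at this
    calc S.T x ≤ max 0 (S.p 0) := this
      _ = S.p 0 := max_eq_right (S.hp_pos 0).le

/-- `J* = [0, p kstar]` is invariant under `T`. -/
lemma T_maps_Jstar : Set.MapsTo S.T (Set.Icc 0 (S.p S.kstar)) (Set.Icc 0 (S.p S.kstar)) := by
  intro x hx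
  have hxJ : x ∈ Set.Icc 0 (S.r 0) := ⟨hx.1, hx.2.trans S.pstar_lt_r0.le⟩
  refine ⟨(S.hTJ hxJ).1, ?_⟩
  rcases hx.1.eq_or_lt with h | h
  · rw [← h, S.hT0]; exact S.pstar_pos.le
  rcases S.piece x h hxJ.2 with ⟨k, hk, h1, h2⟩ | ⟨k, hk, h1, h2⟩ | h1
  · rcases le_or_gt S.kstar k with hks | hks
    · have := S.affOn_le_max (S.haff1 k hk) ⟨h1, h2⟩
      rw [S.hTq (k+1) (by omega), S.hTr k] at this
      calc S.T x ≤ max 0 (S.p k) := this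
        _ = S.p k := max_eq_right (S.hp_pos k).le
        _ ≤ S.p S.kstar := S.p_anti hks
    · -- k < kstar : x ≤ p* ≤ p (k+1) < e k, and T t ≤ t left of the fixed point
      have hks2 : 2 ≤ S.kstar := by omega
      have hpe : S.p (k+1) < S.e k := by
        have := S.hp_e_small hks2 (k+1) (by omega) (by omega)
        simpa using this
      have hxe : x < S.e k := lt_of_le_of_lt (hx.2.trans (S.p_anti (by omega : k + 1 ≤ S.kstar))) hpe
      obtain ⟨m, c, hmc⟩ := S.haff1 k hk
      have hemem := S.he_mem k hk
      have heI : S.e k ∈ Set.Icc (S.q (k+1)) (S.r k) := ⟨hemem.1.le, hemem.2.le⟩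
      have hq1 : m * S.q (k+1) + c = 0 := by
        rw [← hmc _ ⟨le_rfl, (S.hqr k hk).le⟩]; exact S.hTq (k+1) (by omega)
      have hee : m * S.e k + c = S.e k := by
        rw [← hmc _ heI]; exact S.he_fix k hk
      have hqpos := S.hq_pos (k+1) (by omega)
      have hm1 : 1 < m := by nlinarith [hemem.1]
      have hTx : S.T x = m * x + c := hmc x ⟨h1, h2⟩
      -- T x ≤ x since x ≤ e k
      have : S.T x ≤ x := by rw [hTx]; nlinarith
      exact this.trans hx.2
  · rcases le_or_gt S.kstar k with hks | hks
    · have := S.affOn_le_max (S.haff2 k hk) ⟨h1, h2⟩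
      rw [S.hTq k hk, S.hTr k] at this
      calc S.T x ≤ max (S.p k) 0 := this
        _ = S.p k := max_eq_left (S.hp_pos k).le
        _ ≤ S.p S.kstar := S.p_anti hks
    · exfalso
      have hks2 : 2 ≤ S.kstar := by omega
      have hpe : S.p (k+1) < S.e k := by
        have := S.hp_e_small hks2 (k+1) (by omega) (by omega)
        simpa using this
      have := (S.he_mem k hk).2
      have := S.p_anti (by omega : k + 1 ≤ S.kstar)
      linarith [hx.2]
  · -- x ∈ [q 1, r 0] : T x < x
    obtain ⟨m, c, hmc⟩ := S.haff0
    have hq1 : m * S.q 1 + c = 0 := by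
      rw [← hmc _ ⟨le_rfl, S.hq1r0.le⟩]; exact S.hTq 1 le_rfl
    have hr0 : m * S.r 0 + c = S.p 0 := by
      rw [← hmc _ ⟨S.hq1r0.le, le_rfl⟩]; exact S.hTr 0
    have hmpos : 0 < m := by nlinarith [S.hp_pos 0, S.hq1r0]
    have hTx : S.T x = m * x + c := hmc x ⟨h1, hxJ.2⟩
    have hq1pos := S.hq_pos 1 le_rfl
    have h5 : m * (S.r 0 - S.q 1) = S.p 0 := by linear_combination hr0 - hq1
    have h6 : 0 ≤ (x - S.q 1) * (S.r 0 - S.p 0) + S.q 1 * (S.r 0 - x) :=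
      add_nonneg (mul_nonneg (by linarith) (by linarith [S.hp0r0])) (mul_nonneg (by linarith) (by linarith [hxJ.2]))
    have h7 : S.p 0 * (x - S.q 1) ≤ x * (S.r 0 - S.q 1) := by nlinarith [h6]
    have h8 : (m * x + c) * (S.r 0 - S.q 1) = S.p 0 * (x - S.q 1) := by
      linear_combination (x - S.q 1) * h5 + (S.r 0 - S.q 1) * hq1
    have : S.T x ≤ x := by
      rw [hTx]
      nlinarith [h7, h8, sub_pos.2 S.hq1r0]
    exact this.trans hx.2

end SawMapSetup

namespace SawMapSetup

variable (S : SawMapSetup)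

/-- Climbing within branch `j`: from any level `L > e j` one reaches level `p j`. -/
lemma climb (j : ℕ) (hj : 1 ≤ j) (hjp : S.p j ≤ S.p S.kstar) :
    ∀ L, S.e j < L → L ≤ S.p S.kstar →
    ∃ n a b, 1 ≤ n ∧ Set.Icc a b ⊆ Set.Icc 0 L ∧ S.Onto n a b (S.p j) := by
  obtain ⟨m, c, hmc⟩ := S.haff1 j hj
  have hemem := S.he_mem j hj
  have hqpos := S.hq_pos (j+1) (by omega)
  have hq1 : m * S.q (j+1) + c = 0 := by
    rw [← hmc _ ⟨le_rfl, (S.hqr j hj).le⟩]; exact S.hTq (j+1) (by omega)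
  have hee : m * S.e j + c = S.e j := by
    rw [← hmc _ ⟨hemem.1.le, hemem.2.le⟩]; exact S.he_fix j hj
  have hrr : m * S.r j + c = S.p j := by
    rw [← hmc _ ⟨(S.hqr j hj).le, le_rfl⟩]; exact S.hTr j
  have hm1 : 1 < m := by nlinarith [hemem.1, hemem.2, S.hpr j hj]
  have hfull : ∀ L, S.r j ≤ L →
      ∃ n a b, 1 ≤ n ∧ Set.Icc a b ⊆ Set.Icc 0 L ∧ S.Onto n a b (S.p j) := by
    intro L hL
    refine ⟨1, S.q (j+1), S.r j, le_rfl, ?_, ?_⟩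
    · exact Set.Icc_subset_Icc hqpos.le hL
    · have h := S.onto_one (S.hqr j hj) le_rfl ⟨m, c, hmc⟩ (S.hTq (j+1) (by omega)) ?pos
      · rwa [S.hTr j] at h
      · rw [S.hTr j]; exact S.hp_pos j
  have key : ∀ i : ℕ, ∀ L, S.e j < L → L ≤ S.p S.kstar →
      S.r j - S.e j ≤ m ^ i * (L - S.e j) →
      ∃ n a b, 1 ≤ n ∧ Set.Icc a b ⊆ Set.Icc 0 L ∧ S.Onto n a b (S.p j) := by
    intro i
    induction i with
    | zero =>
      intro L hL1 hL2 hcond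
      rw [pow_zero, one_mul] at hcond
      exact hfull L (by linarith)
    | succ i ih =>
      intro L hL1 hL2 hcond
      rcases le_or_gt (S.r j) L with h | h
      · exact hfull L h
      · have hqL : S.q (j+1) < L := hemem.1.trans hL1
        have hTL : S.T L = m * L + c := hmc L ⟨hqL.le, h.le⟩
        have hTLpos : 0 < S.T L := by rw [hTL]; nlinarith
        have hstep : S.Onto 1 (S.q (j+1)) L (S.T L) :=
          S.onto_one hqL h.le ⟨m, c, hmc⟩ (S.hTq (j+1) (by omega)) hTLpos
        have hL1' : S.e j < S.T L := by rw [hTL]; nlinarith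
        have hL2' : S.T L ≤ S.p S.kstar := by
          rw [hTL]
          have : m * L + c ≤ m * S.r j + c := by nlinarith
          rw [hrr] at this
          linarith
        have hcond' : S.r j - S.e j ≤ m ^ i * (S.T L - S.e j) := by
          rw [hTL, pow_succ] at *
          nlinarith [pow_pos (lt_trans one_pos hm1) i]
        obtain ⟨n, a, b, hn, hsub, honto⟩ := ih (S.T L) hL1' hL2' hcond'
        obtain ⟨a'', b'', hsub'', -, -, honto''⟩ :=
          S.onto_comp hstep honto (hsub.trans (Set.Icc_subset_Icc le_rfl le_rfl))
        refine ⟨1 + n, a'', b'', by omega, ?_, honto''⟩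
        exact hsub''.trans (Set.Icc_subset_Icc hqpos.le le_rfl)
  intro L hL1 hL2
  obtain ⟨i, hi⟩ := pow_unbounded_of_one_lt ((S.r j - S.e j) / (L - S.e j)) hm1
  refine key i L hL1 hL2 ?_
  rw [div_lt_iff₀ (by linarith)] at hi
  nlinarith

/-- Descent from branch `kstar + d` down to level `p kstar`. -/
lemma descent : ∀ d : ℕ, ∀ L, S.e (S.kstar + d) < L → L ≤ S.p S.kstar →
    ∃ n a b, 1 ≤ n ∧ Set.Icc a b ⊆ Set.Icc 0 L ∧ S.Onto n a b (S.p S.kstar) := by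
  intro d
  induction d with
  | zero =>
    intro L h1 h2
    have := S.climb S.kstar S.hkstar le_rfl L (by simpa using h1) h2
    exact this
  | succ d ih =>
    intro L h1 h2
    have hj : 1 ≤ S.kstar + d + 1 := by omega
    have hidx : S.kstar + (d + 1) = S.kstar + d + 1 := by omega
    rw [hidx] at h1
    obtain ⟨n, a, b, hn, hsub, honto⟩ :=
      S.climb (S.kstar + d + 1) hj (S.p_anti (by omega)) L h1 h2
    have hbig : S.e (S.kstar + d) < S.p (S.kstar + d + 1) := by
      have := S.hp_e_big (S.kstar + d + 1) (by omega)
      simpa using this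
    obtain ⟨n', a', b', hn', hsub', honto'⟩ :=
      ih (S.p (S.kstar + d + 1)) hbig (S.p_anti (by omega))
    obtain ⟨a'', b'', hsub'', -, -, honto''⟩ := S.onto_comp honto honto' hsub'
    exact ⟨n + n', a'', b'', by omega, hsub''.trans hsub, honto''⟩

/-- From any neighbourhood of `0` one can reach the full level `p kstar`. -/
lemma master (lam : ℝ) (hlam : 0 < lam) :
    ∃ n a b, 1 ≤ n ∧ Set.Icc a b ⊆ Set.Icc 0 (min lam (S.p S.kstar)) ∧
      S.Onto n a b (S.p S.kstar) := by
  set L := min lam (S.p S.kstar) with hLdef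
  have hL : 0 < L := lt_min hlam S.pstar_pos
  obtain ⟨N, hN⟩ := Filter.eventually_atTop.1 (S.hr_lim.eventually (gt_mem_nhds hL))
  set j := max N S.kstar with hjdef
  have hrj : S.r j < L := hN j (le_max_left _ _)
  have hkj : S.kstar ≤ j := le_max_right _ _
  have hidx : S.kstar + (j - S.kstar) = j := Nat.add_sub_cancel' hkj
  have hej : S.e (S.kstar + (j - S.kstar)) < L := by
    rw [hidx]
    exact lt_trans (S.he_mem j (le_trans S.hkstar hkj)).2 hrj
  exact S.descent (j - S.kstar) L hej (min_le_right _ _)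

/-! ### `Ω` facts -/

lemma zero_mem_Omega : (0 : ℝ) ∈ S.Omega :=
  ⟨⟨le_rfl, S.pstar_pos.le⟩, 1, le_rfl, by simp [S.hT0]⟩

lemma q_mem_Omega (k : ℕ) (hk : S.kstar + 1 ≤ k) : S.q k ∈ S.Omega := by
  have h1 : S.q k ≤ S.p S.kstar := by
    calc S.q k ≤ S.q (S.kstar + 1) := S.q_anti (S.kstar + 1) k (by omega) hk
      _ ≤ S.r S.kstar := (S.hqr S.kstar S.hkstar).le
      _ ≤ S.p S.kstar := (S.hpr S.kstar S.hkstar).le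
  exact ⟨⟨(S.hq_pos k (by omega)).le, h1⟩, 1, le_rfl, by simp [S.hTq k (by omega)]⟩

lemma Omega_sub : S.Omega ⊆ Set.Icc 0 (S.p S.kstar) := fun _ hx => hx.1

lemma Sig_sub : S.Sig ⊆ Set.Icc 0 (S.p S.kstar) :=
  closure_minimal S.Omega_sub isClosed_Icc

lemma T_maps_Omega : Set.MapsTo S.T S.Omega S.Omega := by
  rintro x ⟨hJ, n, hn, h0⟩
  refine ⟨S.T_maps_Jstar hJ, ?_⟩
  rcases Nat.lt_or_ge n 2 with h | h
  · have : n = 1 := by omega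
    subst this
    simp only [Function.iterate_one] at h0
    exact ⟨1, le_rfl, by simp [h0, S.hT0]⟩
  · refine ⟨n - 1, by omega, ?_⟩
    have : S.T^[(n-1)+1] x = 0 := by rwa [show (n-1)+1 = n by omega]
    rwa [Function.iterate_succ_apply] at this

lemma onto_pull {n : ℕ} {a b L z : ℝ} (h : S.Onto n a b L)
    (hsubJ : Set.Icc a b ⊆ Set.Icc 0 (S.p S.kstar)) (hn : 1 ≤ n)
    (hz : z ∈ Set.Icc 0 L) (hzO : z ∈ S.Omega) :
    ∃ y ∈ Set.Icc a b, S.T^[n] y = z ∧ y ∈ S.Omega := by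
  obtain ⟨y, hy, hTy⟩ := S.onto_surj h hz
  obtain ⟨-, n', hn', h0⟩ := hzO
  refine ⟨y, hy, hTy, hsubJ hy, n + n', by omega, ?_⟩
  rw [add_comm, Function.iterate_add_apply, hTy]
  exact h0

end SawMapSetup

namespace SawMapSetup

variable (S : SawMapSetup)

/-- Near any point of `Ω \ {0}` (on either side) some iterate of `T` is affine onto
an interval `[0, L]`. -/
lemma local_onto : ∀ n : ℕ, 1 ≤ n → ∀ x : ℝ, 0 < x → x < S.r 0 → S.T^[n] x = 0 →
    (∀ i, 0 < i → i < n → S.T^[i] x ≠ 0) → ∀ ε : ℝ, 0 < ε →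
    (∃ η L, 0 < η ∧ η ≤ ε ∧ η < x ∧ S.Onto n (x - η) x L) ∧
    (∃ η L, 0 < η ∧ η ≤ ε ∧ x + η ≤ S.r 0 ∧ S.Onto n x (x + η) L) := by
  intro n hn
  induction n, hn using Nat.le_induction with
  | base =>
    intro x hx0 hxr hT1 hmin ε hε
    simp only [Function.iterate_one] at hT1
    constructor
    · obtain ⟨u, m, c, hu0, hux, hmc, hm⟩ := S.pieceL x hx0 hxr.le
      set η := min ε ((x - u)/2) with hηdef
      have hη0 : 0 < η := lt_min hε (by linarith)
      have hη2 : η ≤ (x - u)/2 := min_le_right _ _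
      have hηx : η < x := lt_of_le_of_lt hη2 (by linarith)
      have hsub : Set.Icc (x - η) x ⊆ Set.Icc 0 (S.r 0) :=
        fun t ht => ⟨by linarith [ht.1], le_trans ht.2 hxr.le⟩
      have haffI : ∀ t ∈ Set.Icc (x - η) x, S.T^[1] t = m * t + c := by
        intro t ht
        rw [Function.iterate_one]
        exact hmc t ⟨by linarith [ht.1], ht.2⟩
      have h := S.onto_left (show x - η < x by linarith) hsub hm haffI
        (by rw [Function.iterate_one]; exact hT1)
      exact ⟨η, _, hη0, min_le_left _ _, hηx, h⟩
    · obtain ⟨v, m, c, hxv, hvr, hmc, hm⟩ := S.pieceR x hx0 hxr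
      set η := min ε (v - x) with hηdef
      have hη0 : 0 < η := lt_min hε (by linarith)
      have hη2 : η ≤ v - x := min_le_right _ _
      have hsub : Set.Icc x (x + η) ⊆ Set.Icc 0 (S.r 0) :=
        fun t ht => ⟨le_trans hx0.le ht.1, by linarith [ht.2]⟩
      have haffI : ∀ t ∈ Set.Icc x (x + η), S.T^[1] t = m * t + c := by
        intro t ht
        rw [Function.iterate_one]
        exact hmc t ⟨ht.1, by linarith [ht.2]⟩
      have h := S.onto_right (show x < x + η by linarith) hsub hm haffI
        (by rw [Function.iterate_one]; exact hT1)
      exact ⟨η, _, hη0, min_le_left _ _, by linarith, h⟩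
  | succ n hn1 ih =>
    intro x hx0 hxr hTn hmin ε hε
    have hxJ : x ∈ Set.Icc 0 (S.r 0) := ⟨hx0.le, hxr.le⟩
    have hx₁0 : 0 ≤ S.T x := (S.hTJ hxJ).1
    have hx₁ne : S.T x ≠ 0 := by
      have := hmin 1 one_pos (by omega)
      rwa [Function.iterate_one] at this
    have hx₁pos : 0 < S.T x := lt_of_le_of_ne hx₁0 (Ne.symm hx₁ne)
    have hx₁r : S.T x < S.r 0 := lt_of_le_of_lt (S.T_le_p0 x hxJ) S.hp0r0
    have hTn1 : S.T^[n] (S.T x) = 0 := by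
      rw [← Function.iterate_succ_apply]; exact hTn
    have hmin1 : ∀ i, 0 < i → i < n → S.T^[i] (S.T x) ≠ 0 := by
      intro i h1 h2
      have := hmin (i+1) (by omega) (by omega)
      rwa [Function.iterate_succ_apply] at this
    have IH := ih (S.T x) hx₁pos hx₁r hTn1 hmin1 1 one_pos
    constructor
    · -- left interval at x
      obtain ⟨u, m, c, hu0, hux, hmc, hm⟩ := S.pieceL x hx0 hxr.le
      have hTx : m * x + c = S.T x := (hmc x ⟨hux.le, le_rfl⟩).symm
      rcases hm.lt_or_gt with hneg | hpos
      · -- m < 0 : image of [x-η, x] lies to the right of T x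
        obtain ⟨-, ⟨η₁, L₁, hη₁, -, hη₁r, honto₁⟩⟩ := IH
        obtain ⟨hab₁, hL₁, m', c', hm', haff', him'⟩ := honto₁
        set η := min (min ε ((x - u)/2)) (η₁ / (-m)) with hηdef
        have hmn : 0 < -m := by linarith
        have hη0 : 0 < η := lt_min (lt_min hε (by linarith)) (div_pos hη₁ hmn)
        have hηε : η ≤ ε := le_trans (min_le_left _ _) (min_le_left _ _)
        have hη2 : η ≤ (x - u)/2 := le_trans (min_le_left _ _) (min_le_right _ _)
        have hηx : η < x := lt_of_le_of_lt hη2 (by linarith)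
        have hηm : (-m) * η ≤ η₁ := by
          have h := min_le_right (min ε ((x - u)/2)) (η₁ / (-m))
          rw [← hηdef] at h
          rw [le_div_iff₀ hmn] at h
          linarith
        have haffC : ∀ t ∈ Set.Icc (x - η) x,
            S.T^[n+1] t = (m' * m) * t + (m' * c + c') := by
          intro t ht
          have htm : t ∈ Set.Icc u x := ⟨by linarith [ht.1], ht.2⟩
          have k1 := mul_le_mul_of_nonpos_left ht.2 hneg.le
          have k2 := mul_le_mul_of_nonpos_left ht.1 hneg.le
          have k3 : m * (x - η) = m * x - m * η := by ring
          have hmem1 : m * t + c ∈ Set.Icc (S.T x) (S.T x + η₁) :=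
            ⟨by linarith, by linarith [hηm]⟩
          rw [Function.iterate_succ_apply, hmc t htm, haff' _ hmem1]
          ring
        have hsub : Set.Icc (x - η) x ⊆ Set.Icc 0 (S.r 0) :=
          fun t ht => ⟨by linarith [ht.1], le_trans ht.2 hxr.le⟩
        have h := S.onto_left (show x - η < x by linarith) hsub
          (mul_ne_zero hm' hneg.ne) haffC hTn
        exact ⟨η, _, hη0, hηε, hηx, h⟩
      · -- 0 < m : image of [x-η, x] lies to the left of T x
        obtain ⟨⟨η₁, L₁, hη₁, -, hη₁x, honto₁⟩, -⟩ := IH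
        obtain ⟨hab₁, hL₁, m', c', hm', haff', him'⟩ := honto₁
        set η := min (min ε ((x - u)/2)) (η₁ / m) with hηdef
        have hη0 : 0 < η := lt_min (lt_min hε (by linarith)) (div_pos hη₁ hpos)
        have hηε : η ≤ ε := le_trans (min_le_left _ _) (min_le_left _ _)
        have hη2 : η ≤ (x - u)/2 := le_trans (min_le_left _ _) (min_le_right _ _)
        have hηx : η < x := lt_of_le_of_lt hη2 (by linarith)
        have hηm : m * η ≤ η₁ := by
          have h := min_le_right (min ε ((x - u)/2)) (η₁ / m)
          rw [← hηdef] at h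
          rw [le_div_iff₀ hpos] at h
          linarith
        have haffC : ∀ t ∈ Set.Icc (x - η) x,
            S.T^[n+1] t = (m' * m) * t + (m' * c + c') := by
          intro t ht
          have htm : t ∈ Set.Icc u x := ⟨by linarith [ht.1], ht.2⟩
          have k1 := mul_le_mul_of_nonneg_left ht.2 hpos.le
          have k2 := mul_le_mul_of_nonneg_left ht.1 hpos.le
          have k3 : m * (x - η) = m * x - m * η := by ring
          have hmem1 : m * t + c ∈ Set.Icc (S.T x - η₁) (S.T x) :=
            ⟨by linarith [hηm], by linarith⟩
          rw [Function.iterate_succ_apply, hmc t htm, haff' _ hmem1]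
          ring
        have hsub : Set.Icc (x - η) x ⊆ Set.Icc 0 (S.r 0) :=
          fun t ht => ⟨by linarith [ht.1], le_trans ht.2 hxr.le⟩
        have h := S.onto_left (show x - η < x by linarith) hsub
          (mul_ne_zero hm' hpos.ne') haffC hTn
        exact ⟨η, _, hη0, hηε, hηx, h⟩
    · -- right interval at x
      obtain ⟨v, m, c, hxv, hvr, hmc, hm⟩ := S.pieceR x hx0 hxr
      have hTx : m * x + c = S.T x := (hmc x ⟨le_rfl, hxv.le⟩).symm
      rcases hm.lt_or_gt with hneg | hpos
      · -- m < 0 : image of [x, x+η] lies to the left of T x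
        obtain ⟨⟨η₁, L₁, hη₁, -, hη₁x, honto₁⟩, -⟩ := IH
        obtain ⟨hab₁, hL₁, m', c', hm', haff', him'⟩ := honto₁
        set η := min (min ε (v - x)) (η₁ / (-m)) with hηdef
        have hmn : 0 < -m := by linarith
        have hη0 : 0 < η := lt_min (lt_min hε (by linarith)) (div_pos hη₁ hmn)
        have hηε : η ≤ ε := le_trans (min_le_left _ _) (min_le_left _ _)
        have hη2 : η ≤ v - x := le_trans (min_le_left _ _) (min_le_right _ _)
        have hηm : (-m) * η ≤ η₁ := by
          have h := min_le_right (min ε (v - x)) (η₁ / (-m))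
          rw [← hηdef] at h
          rw [le_div_iff₀ hmn] at h
          linarith
        have haffC : ∀ t ∈ Set.Icc x (x + η),
            S.T^[n+1] t = (m' * m) * t + (m' * c + c') := by
          intro t ht
          have htm : t ∈ Set.Icc x v := ⟨ht.1, by linarith [ht.2]⟩
          have k1 := mul_le_mul_of_nonpos_left ht.1 hneg.le
          have k2 := mul_le_mul_of_nonpos_left ht.2 hneg.le
          have k3 : m * (x + η) = m * x + m * η := by ring
          have hmem1 : m * t + c ∈ Set.Icc (S.T x - η₁) (S.T x) :=
            ⟨by linarith [hηm], by linarith⟩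
          rw [Function.iterate_succ_apply, hmc t htm, haff' _ hmem1]
          ring
        have hsub : Set.Icc x (x + η) ⊆ Set.Icc 0 (S.r 0) :=
          fun t ht => ⟨le_trans hx0.le ht.1, by linarith [ht.2]⟩
        have h := S.onto_right (show x < x + η by linarith) hsub
          (mul_ne_zero hm' hneg.ne) haffC hTn
        exact ⟨η, _, hη0, hηε, by linarith, h⟩
      · -- 0 < m : image of [x, x+η] lies to the right of T x
        obtain ⟨-, ⟨η₁, L₁, hη₁, -, hη₁r, honto₁⟩⟩ := IH
        obtain ⟨hab₁, hL₁, m', c', hm', haff', him'⟩ := honto₁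
        set η := min (min ε (v - x)) (η₁ / m) with hηdef
        have hη0 : 0 < η := lt_min (lt_min hε (by linarith)) (div_pos hη₁ hpos)
        have hηε : η ≤ ε := le_trans (min_le_left _ _) (min_le_left _ _)
        have hη2 : η ≤ v - x := le_trans (min_le_left _ _) (min_le_right _ _)
        have hηm : m * η ≤ η₁ := by
          have h := min_le_right (min ε (v - x)) (η₁ / m)
          rw [← hηdef] at h
          rw [le_div_iff₀ hpos] at h
          linarith
        have haffC : ∀ t ∈ Set.Icc x (x + η),
            S.T^[n+1] t = (m' * m) * t + (m' * c + c') := by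
          intro t ht
          have htm : t ∈ Set.Icc x v := ⟨ht.1, by linarith [ht.2]⟩
          have k1 := mul_le_mul_of_nonneg_left ht.1 hpos.le
          have k2 := mul_le_mul_of_nonneg_left ht.2 hpos.le
          have k3 : m * (x + η) = m * x + m * η := by ring
          have hmem1 : m * t + c ∈ Set.Icc (S.T x) (S.T x + η₁) :=
            ⟨by linarith, by linarith [hηm]⟩
          rw [Function.iterate_succ_apply, hmc t htm, haff' _ hmem1]
          ring
        have hsub : Set.Icc x (x + η) ⊆ Set.Icc 0 (S.r 0) :=
          fun t ht => ⟨le_trans hx0.le ht.1, by linarith [ht.2]⟩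
        have h := S.onto_right (show x < x + η by linarith) hsub
          (mul_ne_zero hm' hpos.ne') haffC hTn
        exact ⟨η, _, hη0, hηε, by linarith, h⟩

end SawMapSetup

namespace SawMapSetup

variable (S : SawMapSetup)

/-- From any one-sided neighbourhood of a nonzero point of `Ω`, some iterate of `T`
is affine onto the whole of `[0, p kstar]`. -/
lemma reach (x : ℝ) (hx : x ∈ S.Omega) (hx0 : x ≠ 0) (ε : ℝ) (hε : 0 < ε) :
    ∃ N a b, 1 ≤ N ∧ Set.Icc a b ⊆ Set.Icc 0 (S.p S.kstar) ∧
      Set.Icc a b ⊆ Set.Icc (x - ε) x ∧ S.Onto N a b (S.p S.kstar) := by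
  obtain ⟨⟨hx0', hxp⟩, hex⟩ := hx
  have hxpos : 0 < x := lt_of_le_of_ne hx0' (Ne.symm hx0)
  have hxr : x < S.r 0 := lt_of_le_of_lt hxp S.pstar_lt_r0
  set n := Nat.find hex with hndef
  have hspec : 1 ≤ n ∧ S.T^[n] x = 0 := Nat.find_spec hex
  have hmin : ∀ i, 0 < i → i < n → S.T^[i] x ≠ 0 := by
    intro i h1 h2 habs
    exact Nat.find_min hex h2 ⟨h1, habs⟩
  obtain ⟨⟨η, L, hη0, hηε, hηx, honto⟩, -⟩ :=
    S.local_onto n hspec.1 x hxpos hxr hspec.2 hmin ε hε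
  have hL0 : 0 < L := honto.2.1
  obtain ⟨M, a', b', hM, hsub', honto'⟩ := S.master L hL0
  obtain ⟨a, b, hsubab, -, -, honto''⟩ := S.onto_comp honto honto'
    (hsub'.trans (Set.Icc_subset_Icc le_rfl (min_le_left _ _)))
  refine ⟨n + M, a, b, by omega, ?_, ?_, honto''⟩
  · intro t ht
    have := hsubab ht
    exact ⟨by linarith [this.1, hηx], le_trans this.2 hxp⟩
  · intro t ht
    have := hsubab ht
    exact ⟨by linarith [this.1, hηε], this.2⟩

/-- `Ω` points (other than `0`) approximate every point of `Σ`. -/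
lemma omega_near (x : ℝ) (hx : x ∈ S.Sig) (ε : ℝ) (hε : 0 < ε) :
    ∃ w ∈ S.Omega, w ≠ 0 ∧ |x - w| < ε := by
  obtain ⟨w, hw, hd⟩ := Metric.mem_closure_iff.1 hx ε hε
  rw [Real.dist_eq] at hd
  rcases eq_or_ne w 0 with rfl | hne
  · have hx0 : |x| < ε := by simpa using hd
    have hδ : 0 < ε - |x| := by linarith
    obtain ⟨N, hN⟩ := Filter.eventually_atTop.1 (S.hq_lim.eventually (gt_mem_nhds hδ))
    set k := max N (S.kstar + 1) with hkdef
    have hqk : S.q k < ε - |x| := hN k (le_max_left _ _)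
    have hqpos : 0 < S.q k := S.hq_pos k (by have := le_max_right N (S.kstar + 1); omega)
    refine ⟨S.q k, S.q_mem_Omega k (le_max_right _ _), hqpos.ne', ?_⟩
    calc |x - S.q k| ≤ |x| + |S.q k| := abs_sub x (S.q k)
      _ = |x| + S.q k := by rw [abs_of_pos hqpos]
      _ < ε := by linarith
  · exact ⟨w, hw, hne, hd⟩

/-- `T` is continuous on `(0, r 0)`. -/
lemma contAt (x : ℝ) (hx0 : 0 < x) (hxr : x < S.r 0) : ContinuousAt S.T x := by
  rw [continuousAt_iff_continuous_left_right]
  constructor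
  · obtain ⟨u, m, c, hu0, hux, hmc, hm⟩ := S.pieceL x hx0 hxr.le
    have hcw : ContinuousWithinAt S.T (Set.Icc u x) x := by
      refine ContinuousWithinAt.congr
        ((continuous_const.mul continuous_id).add continuous_const).continuousWithinAt
        (fun y hy => hmc y hy) (hmc x ⟨hux.le, le_rfl⟩)
    refine hcw.mono_of_mem_nhdsWithin ?_
    rw [mem_nhdsWithin]
    exact ⟨Set.Ioi u, isOpen_Ioi, hux, fun t ht => ⟨ht.1.le, ht.2⟩⟩
  · obtain ⟨v, m, c, hxv, hvr, hmc, hm⟩ := S.pieceR x hx0 hxr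
    have hcw : ContinuousWithinAt S.T (Set.Icc x v) x := by
      refine ContinuousWithinAt.congr
        ((continuous_const.mul continuous_id).add continuous_const).continuousWithinAt
        (fun y hy => hmc y hy) (hmc x ⟨le_rfl, hxv.le⟩)
    refine hcw.mono_of_mem_nhdsWithin ?_
    rw [mem_nhdsWithin]
    exact ⟨Set.Iio v, isOpen_Iio, hxv, fun t ht => ⟨ht.2, ht.1.le⟩⟩

lemma zero_mem_Sig : (0 : ℝ) ∈ S.Sig := subset_closure S.zero_mem_Omega

lemma T_maps_Sig : Set.MapsTo S.T S.Sig S.Sig := by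
  intro x hx
  rcases eq_or_ne x 0 with rfl | hne
  · rw [S.hT0]; exact S.zero_mem_Sig
  · have hx' := S.Sig_sub hx
    have hx0 : 0 < x := lt_of_le_of_ne hx'.1 (Ne.symm hne)
    have hxr : x < S.r 0 := lt_of_le_of_lt hx'.2 S.pstar_lt_r0
    have h1 : S.T x ∈ closure (S.T '' S.Omega) :=
      _root_.mem_closure_image (S.contAt x hx0 hxr) hx
    exact closure_mono (Set.MapsTo.image_subset S.T_maps_Omega) h1

end SawMapSetup

namespace SawMapSetup

variable (S : SawMapSetup)

set_option maxHeartbeats 1000000 in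
/-- Construction of periodic points in `Σ` near any point of `Σ`. -/
lemma periodic_dense : ∀ x ∈ S.Sig, ∀ ε > 0, ∃ y ∈ S.Sig, |x - y| < ε ∧
    ∃ n, 1 ≤ n ∧ S.T^[n] y = y := by
  intro x hx ε hε
  obtain ⟨w, hwO, hw0, hxw⟩ := S.omega_near x hx (ε/2) (by linarith)
  have hpp := S.pstar_pos
  set ε' := min (ε/2) (S.p S.kstar / 2) with hε'def
  have hε'0 : 0 < ε' := lt_min (by linarith) (by linarith)
  obtain ⟨N, a, b, hN, hsubJ, hsubw, honto⟩ := S.reach w hwO hw0 ε' hε'0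
  obtain ⟨hab, hL, m, c, hm0, haff, him⟩ := honto
  have ha0 : 0 ≤ a := (hsubJ ⟨le_rfl, hab.le⟩).1
  have hbp : b ≤ S.p S.kstar := (hsubJ ⟨hab.le, le_rfl⟩).2
  have haw : w - ε' ≤ a := (hsubw ⟨le_rfl, hab.le⟩).1
  have hbw : b ≤ w := (hsubw ⟨hab.le, le_rfl⟩).2
  have hba : b - a ≤ ε' := by linarith
  have hba2 : 2 * (b - a) ≤ S.p S.kstar := by
    have : ε' ≤ S.p S.kstar / 2 := min_le_right _ _
    linarith
  have himg_eq : S.T^[N] '' Set.Icc a b = (fun t => m * t + c) '' Set.Icc a b :=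
    Set.image_congr haff
  have hcont : Continuous fun t : ℝ => m * t + c - t := by continuity
  -- a fixed point of the affine map in [a,b], with slope of absolute value ≥ 2
  have hfix : (∃ y ∈ Set.Icc a b, m * y + c = y) ∧ 2 ≤ |m| := by
    rcases hm0.lt_or_gt with hm | hm
    · have him2 : Set.Icc (m * b + c) (m * a + c) = Set.Icc 0 (S.p S.kstar) := by
        rw [← image_affine_neg hm hab.le, ← himg_eq, him]
      obtain ⟨he1, he2⟩ := Icc_eq_Icc_endpoints (by nlinarith) hpp.le him2
      constructor
      · have h0 : (0:ℝ) ∈ Set.Icc (m * b + c - b) (m * a + c - a) := by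
          constructor
          · rw [he1]; linarith
          · rw [he2]; linarith
        obtain ⟨y, hy, hgy⟩ := intermediate_value_Icc' hab.le hcont.continuousOn h0
        have hgy' : m * y + c - y = 0 := hgy
        exact ⟨y, hy, by linarith⟩
      · rw [abs_of_neg hm]; nlinarith
    · have him2 : Set.Icc (m * a + c) (m * b + c) = Set.Icc 0 (S.p S.kstar) := by
        rw [← image_affine_pos hm hab.le, ← himg_eq, him]
      obtain ⟨he1, he2⟩ := Icc_eq_Icc_endpoints (by nlinarith) hpp.le him2
      constructor
      · have h0 : (0:ℝ) ∈ Set.Icc (m * a + c - a) (m * b + c - b) := by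
          constructor
          · rw [he1]; linarith
          · rw [he2]; linarith
        obtain ⟨y, hy, hgy⟩ := intermediate_value_Icc hab.le hcont.continuousOn h0
        have hgy' : m * y + c - y = 0 := hgy
        exact ⟨y, hy, by linarith⟩
      · rw [abs_of_pos hm]; nlinarith
  obtain ⟨⟨y, hy, hyfix⟩, hm2⟩ := hfix
  have hTNy : S.T^[N] y = y := by rw [haff y hy]; exact hyfix
  -- the inverse map z ↦ (z - c)/m
  have hφψ : ∀ z : ℝ, m * ((z - c)/m) + c = z := fun z => by field_simp; ring
  have hψmem : ∀ z ∈ Set.Icc 0 (S.p S.kstar), (z - c)/m ∈ Set.Icc a b := by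
    intro z hz
    rw [← him] at hz
    obtain ⟨t, ht, hzt⟩ := hz
    rw [haff t ht] at hzt
    have h1 : (z - c)/m = t := by rw [← hzt]; field_simp; ring
    rw [h1]; exact ht
  set zs : ℕ → ℝ := fun j => (fun z : ℝ => (z - c)/m)^[j] 0 with hzsdef
  have hzs0 : zs 0 = 0 := rfl
  have hzsS : ∀ j, zs (j+1) = (zs j - c)/m := fun j =>
    Function.iterate_succ_apply' (fun z : ℝ => (z - c)/m) j 0
  have claim : ∀ j : ℕ, zs j ∈ Set.Icc 0 (S.p S.kstar) ∧ S.T^[j*N] (zs j) = 0 ∧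
      |zs j - y| ≤ S.p S.kstar / 2^j := by
    intro j
    induction j with
    | zero =>
      refine ⟨by rw [hzs0]; exact ⟨le_rfl, hpp.le⟩, ?_, ?_⟩
      · rw [Nat.zero_mul, Function.iterate_zero_apply, hzs0]
      · have hy0 : 0 ≤ y := (hsubJ hy).1
        have hyp : y ≤ S.p S.kstar := (hsubJ hy).2
        rw [hzs0, zero_sub, abs_neg, abs_of_nonneg hy0, pow_zero, div_one]
        exact hyp
    | succ j ihj =>
      obtain ⟨hmem, horb, hdist⟩ := ihj
      have hmem' : (zs j - c)/m ∈ Set.Icc a b := hψmem _ hmem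
      refine ⟨by rw [hzsS j]; exact hsubJ hmem', ?_, ?_⟩
      · rw [hzsS j, Nat.succ_mul, Function.iterate_add_apply, haff _ hmem', hφψ]
        exact horb
      · have hdiff : (zs j - c)/m - y = (zs j - y)/m := by
          field_simp
          linarith
        rw [hzsS j, hdiff, abs_div]
        have h2m : |zs j - y| / |m| ≤ |zs j - y| / 2 :=
          div_le_div_of_nonneg_left (abs_nonneg _) two_pos hm2
        have h2 : |zs j - y| / 2 ≤ (S.p S.kstar / 2^j) / 2 := by linarith
        have h3 : (S.p S.kstar / 2^j) / 2 = S.p S.kstar / 2^(j+1) := by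
          rw [pow_succ]; ring
        linarith
  have hySig : y ∈ S.Sig := by
    rw [Sig, Metric.mem_closure_iff]
    intro δ hδ
    obtain ⟨j₀, hj₀⟩ := pow_unbounded_of_one_lt (S.p S.kstar / δ) one_lt_two
    have hj : S.p S.kstar / 2^(j₀+1) < δ := by
      rw [div_lt_iff₀ hδ] at hj₀
      rw [div_lt_iff₀ (pow_pos two_pos _)]
      have : (2:ℝ)^j₀ ≤ 2^(j₀+1) := pow_le_pow_right₀ one_le_two (Nat.le_succ _)
      nlinarith
    obtain ⟨hmem, horb, hdist⟩ := claim (j₀+1)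
    refine ⟨zs (j₀+1), ⟨hmem, (j₀+1)*N, ?_, horb⟩, ?_⟩
    · have := Nat.mul_le_mul (Nat.le_refl (j₀+1)) hN
      omega
    · rw [Real.dist_eq, abs_sub_comm]
      linarith
  refine ⟨y, hySig, ?_, N, hN, hTNy⟩
  have hwy : |w - y| ≤ ε' := by
    have h1 := (hsubw hy).1
    have h2 := (hsubw hy).2
    rw [abs_of_nonneg (by linarith)]
    linarith
  calc |x - y| = |(x - w) + (w - y)| := by ring_nf
    _ ≤ |x - w| + |w - y| := abs_add_le _ _
    _ < ε := by have : ε' ≤ ε/2 := min_le_left _ _; linarith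

/-- Sensitive dependence on initial conditions on `Σ`. -/
lemma sensitive : ∃ bb > 0, ∀ x ∈ S.Sig, ∀ ε > 0, ∃ y ∈ S.Sig, |x - y| < ε ∧
    ∃ k : ℕ, bb < |S.T^[k] x - S.T^[k] y| := by
  set z₀ := S.q (S.kstar + 1) with hz₀def
  have hz₀pos : 0 < z₀ := S.hq_pos _ (by omega)
  have hz₀O : z₀ ∈ S.Omega := S.q_mem_Omega _ le_rfl
  have hz₀p : z₀ ≤ S.p S.kstar := (S.Omega_sub hz₀O).2
  refine ⟨z₀/3, by linarith, ?_⟩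
  intro x hx ε hε
  obtain ⟨w, hwO, hw0, hxw⟩ := S.omega_near x hx (ε/2) (by linarith)
  obtain ⟨N, a, b, hN, hsubJ, hsubw, honto⟩ := S.reach w hwO hw0 (ε/2) (by linarith)
  have hxJ : x ∈ Set.Icc 0 (S.r 0) := by
    have := S.Sig_sub hx
    exact ⟨this.1, this.2.trans S.pstar_lt_r0.le⟩
  have hTx0 : 0 ≤ S.T^[N] x := (S.hTJ.iterate N hxJ).1
  have hdy : ∀ y ∈ Set.Icc a b, |x - y| < ε := by
    intro y hy
    have h1 := (hsubw hy).1
    have h2 := (hsubw hy).2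
    have hwy : |w - y| ≤ ε/2 := by rw [abs_of_nonneg (by linarith)]; linarith
    calc |x - y| = |(x - w) + (w - y)| := by ring_nf
      _ ≤ |x - w| + |w - y| := abs_add_le _ _
      _ < ε := by linarith
  rcases le_or_gt (z₀/2) (S.T^[N] x) with hcase | hcase
  · obtain ⟨y, hy, hTy, hyO⟩ := S.onto_pull honto hsubJ hN
      (⟨le_rfl, S.pstar_pos.le⟩) S.zero_mem_Omega
    refine ⟨y, subset_closure hyO, hdy y hy, N, ?_⟩
    rw [hTy, sub_zero, abs_of_nonneg hTx0]
    linarith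
  · obtain ⟨y, hy, hTy, hyO⟩ := S.onto_pull honto hsubJ hN
      (⟨hz₀pos.le, hz₀p⟩) hz₀O
    refine ⟨y, subset_closure hyO, hdy y hy, N, ?_⟩
    rw [hTy, abs_sub_comm, abs_of_nonneg (by linarith)]
    linarith

end SawMapSetup

namespace SawMapSetup

variable (S : SawMapSetup)

set_option maxHeartbeats 1000000 in
/-- There is a point of `Σ` whose forward orbit is dense in `Σ`. -/
lemma dense_orbit : ∃ z ∈ S.Sig, ∀ x ∈ S.Sig, ∀ ε > 0, ∃ n : ℕ, |S.T^[n] z - x| < ε := by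
  classical
  have hpp := S.pstar_pos
  -- a dense sequence in Σ
  haveI : Nonempty ↥S.Sig := ⟨⟨0, S.zero_mem_Sig⟩⟩
  obtain ⟨u, hu⟩ := TopologicalSpace.exists_dense_seq ↥S.Sig
  have hudense : ∀ x ∈ S.Sig, ∀ δ : ℝ, 0 < δ → ∃ i, |x - (u i : ℝ)| < δ := by
    intro x hx δ hδ
    obtain ⟨i, hi⟩ := Metric.denseRange_iff.1 hu ⟨x, hx⟩ δ hδ
    refine ⟨i, ?_⟩
    rw [Subtype.dist_eq, Real.dist_eq] at hi
    exact hi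
  have humem : ∀ i, (u i : ℝ) ∈ S.Sig := fun i => (u i).2
  -- invariant for the nested-interval construction
  set Inv : ℝ → ℝ → ℕ → Prop := fun a b N => 1 ≤ N ∧
    Set.Icc a b ⊆ Set.Icc 0 (S.p S.kstar) ∧ b - a ≤ S.p S.kstar ∧
    S.Onto N a b (S.p S.kstar) with hInvdef
  -- one refinement step
  have hstep : ∀ (j : ℕ) (a b : ℝ) (N : ℕ), Inv a b N →
      ∃ a' b' N', Inv a' b' N' ∧ Set.Icc a' b' ⊆ Set.Icc a b ∧
        b' - a' ≤ (b - a)/2 ∧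
        ∀ t ∈ Set.Icc a' b', |S.T^[N] t - (u (Nat.unpair j).1 : ℝ)| < 1/((j:ℝ)+1) := by
    intro j a b N hInvs
    obtain ⟨hN, hsubJ, hlen, honto⟩ := hInvs
    have hδ : (0:ℝ) < 1/((j:ℝ)+1) := by positivity
    obtain ⟨w, hwO, hw0, hxw⟩ :=
      S.omega_near _ (humem (Nat.unpair j).1) (1/((j:ℝ)+1)/2) (by positivity)
    set εR := min (1/((j:ℝ)+1)/2) (S.p S.kstar / 2) with hεRdef
    have hεR0 : 0 < εR := lt_min (by positivity) (by linarith)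
    obtain ⟨M, a₁, b₁, hM, hsubJ₁, hsubw₁, honto₁⟩ := S.reach w hwO hw0 εR hεR0
    obtain ⟨a', b', hsubab, himab, hlen', honto'⟩ := S.onto_comp honto honto₁ hsubJ₁
    have hba1 : b₁ - a₁ ≤ S.p S.kstar / 2 := by
      have h1 := (hsubw₁ ⟨le_rfl, honto₁.1.le⟩).1
      have h2 := (hsubw₁ ⟨honto₁.1.le, le_rfl⟩).2
      have h3 : εR ≤ S.p S.kstar / 2 := min_le_right _ _
      linarith
    have hba : 0 < b - a := sub_pos.2 honto.1
    have hhalf : b' - a' ≤ (b - a)/2 := by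
      have h4 : (b₁ - a₁) * (b - a) ≤ (S.p S.kstar / 2) * (b - a) :=
        mul_le_mul_of_nonneg_right hba1 hba.le
      nlinarith [hlen']
    refine ⟨a', b', N + M, ⟨by omega, hsubab.trans hsubJ, by linarith, honto'⟩,
      hsubab, hhalf, ?_⟩
    intro t ht
    have himg : S.T^[N] t ∈ Set.Icc a₁ b₁ := by
      have := Set.mem_image_of_mem (S.T^[N]) ht
      rwa [himab] at this
    have h2 := hsubw₁ himg
    have hεR1 : εR ≤ 1/((j:ℝ)+1)/2 := min_le_left _ _
    have hd1 : |S.T^[N] t - w| ≤ εR := by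
      rw [abs_of_nonpos (by linarith [h2.2])]
      linarith [h2.1]
    have hd2 : |w - (u (Nat.unpair j).1 : ℝ)| < 1/((j:ℝ)+1)/2 := by
      rw [abs_sub_comm]
      exact hxw
    calc |S.T^[N] t - (u (Nat.unpair j).1 : ℝ)|
        = |(S.T^[N] t - w) + (w - (u (Nat.unpair j).1 : ℝ))| := by ring_nf
      _ ≤ |S.T^[N] t - w| + |w - (u (Nat.unpair j).1 : ℝ)| := abs_add_le _ _
      _ < 1/((j:ℝ)+1) := by linarith
  -- base interval
  obtain ⟨w₀, hw₀O, hw₀0, -⟩ := S.omega_near 0 S.zero_mem_Sig 1 one_pos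
  obtain ⟨N₀, a₀, b₀, hN₀, hsubJ₀, hsubw₀, honto₀⟩ :=
    S.reach w₀ hw₀O hw₀0 (S.p S.kstar) S.pstar_pos
  have hInv₀ : Inv a₀ b₀ N₀ := by
    refine ⟨hN₀, hsubJ₀, ?_, honto₀⟩
    have h1 := (hsubw₀ ⟨le_rfl, honto₀.1.le⟩).1
    have h2 := (hsubw₀ ⟨honto₀.1.le, le_rfl⟩).2
    linarith
  -- step on triples
  have hstep' : ∀ (j : ℕ) (s : ℝ × ℝ × ℕ), Inv s.1 s.2.1 s.2.2 →
      ∃ t : ℝ × ℝ × ℕ, Inv t.1 t.2.1 t.2.2 ∧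
        Set.Icc t.1 t.2.1 ⊆ Set.Icc s.1 s.2.1 ∧
        t.2.1 - t.1 ≤ (s.2.1 - s.1)/2 ∧
        ∀ y ∈ Set.Icc t.1 t.2.1, |S.T^[s.2.2] y - (u (Nat.unpair j).1 : ℝ)| < 1/((j:ℝ)+1) := by
    rintro j ⟨a, b, N⟩ hInvs
    obtain ⟨a', b', N', h1, h2, h3, h4⟩ := hstep j a b N hInvs
    exact ⟨(a', b', N'), h1, h2, h3, h4⟩
  -- the recursively defined sequence of states
  let St := {s : ℝ × ℝ × ℕ // Inv s.1 s.2.1 s.2.2}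
  let step : ℕ → St → St := fun j s =>
    ⟨Classical.choose (hstep' j s.1 s.2), (Classical.choose_spec (hstep' j s.1 s.2)).1⟩
  let F : ℕ → St := fun n => Nat.rec ⟨(a₀, b₀, N₀), hInv₀⟩ step n
  set aa : ℕ → ℝ := fun j => (F j).1.1 with haadef
  set bb : ℕ → ℝ := fun j => (F j).1.2.1 with hbbdef
  set NN : ℕ → ℕ := fun j => (F j).1.2.2 with hNNdef
  have hInvF : ∀ j, Inv (aa j) (bb j) (NN j) := fun j => (F j).2
  have hrel : ∀ j, Set.Icc (aa (j+1)) (bb (j+1)) ⊆ Set.Icc (aa j) (bb j) ∧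
      bb (j+1) - aa (j+1) ≤ (bb j - aa j)/2 ∧
      ∀ y ∈ Set.Icc (aa (j+1)) (bb (j+1)),
        |S.T^[NN j] y - (u (Nat.unpair j).1 : ℝ)| < 1/((j:ℝ)+1) := by
    intro j
    have hspec := Classical.choose_spec (hstep' j (F j).1 (F j).2)
    exact ⟨hspec.2.1, hspec.2.2.1, hspec.2.2.2⟩
  have hab : ∀ j, aa j < bb j := fun j => (hInvF j).2.2.2.1
  have hnest : ∀ i j : ℕ, i ≤ j → Set.Icc (aa j) (bb j) ⊆ Set.Icc (aa i) (bb i) := by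
    intro i j hij
    induction j, hij using Nat.le_induction with
    | base => exact subset_rfl
    | succ j hij ih => exact ((hrel j).1).trans ih
  have hbdd : BddAbove (Set.range aa) := by
    refine ⟨bb 0, ?_⟩
    rintro _ ⟨j, rfl⟩
    exact (hnest 0 j (Nat.zero_le _) ⟨le_rfl, (hab j).le⟩).2
  set z := ⨆ j, aa j with hzdef
  have hza : ∀ j, aa j ≤ z := fun j => le_ciSup hbdd j
  have hzb : ∀ j, z ≤ bb j := by
    intro j
    refine ciSup_le fun i => ?_
    rcases le_total i j with h | h
    · exact le_trans (hnest i j h ⟨le_rfl, (hab j).le⟩).1 (hab j).le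
    · exact (hnest j i h ⟨le_rfl, (hab i).le⟩).2
  have hzmem : ∀ j, z ∈ Set.Icc (aa j) (bb j) := fun j => ⟨hza j, hzb j⟩
  have hlenF : ∀ j, bb j - aa j ≤ S.p S.kstar / 2^j := by
    intro j
    induction j with
    | zero =>
      rw [pow_zero, div_one]
      exact (hInvF 0).2.2.1
    | succ j ih =>
      have h1 := (hrel j).2.1
      have h2 : (S.p S.kstar / 2^j)/2 = S.p S.kstar / 2^(j+1) := by rw [pow_succ]; ring
      linarith
  have hzSig : z ∈ S.Sig := by
    rw [Sig, Metric.mem_closure_iff]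
    intro δ hδ
    obtain ⟨j, hj⟩ := pow_unbounded_of_one_lt (S.p S.kstar / δ) one_lt_two
    have hjδ : S.p S.kstar / 2^j < δ := by
      rw [div_lt_iff₀ hδ] at hj
      rw [div_lt_iff₀ (pow_pos two_pos _)]
      nlinarith
    obtain ⟨ω, hω, hTω⟩ := S.onto_surj (hInvF j).2.2.2 ⟨le_rfl, hpp.le⟩
    refine ⟨ω, ⟨(hInvF j).2.1 hω, NN j, (hInvF j).1, hTω⟩, ?_⟩
    rw [Real.dist_eq]
    have h1 := (hzmem j).1
    have h2 := (hzmem j).2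
    have h3 := hω.1
    have h4 := hω.2
    calc |z - ω| ≤ bb j - aa j := abs_le.2 ⟨by linarith, by linarith⟩
      _ ≤ S.p S.kstar / 2^j := hlenF j
      _ < δ := hjδ
  -- conclusion: the orbit of z is dense in Σ
  refine ⟨z, hzSig, ?_⟩
  intro x hx ε hε
  obtain ⟨i, hi⟩ := hudense x hx (ε/2) (by linarith)
  obtain ⟨k₀, hk₀⟩ := exists_nat_one_div_lt (show (0:ℝ) < ε/2 by linarith)
  set j := Nat.pair i k₀ with hjdef
  have hjk : k₀ ≤ j := Nat.right_le_pair i k₀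
  have h1j : (1:ℝ)/((j:ℝ)+1) ≤ 1/((k₀:ℝ)+1) := by
    apply one_div_le_one_div_of_le (by positivity)
    have : (k₀:ℝ) ≤ (j:ℝ) := Nat.cast_le.2 hjk
    linarith
  have hvisit := (hrel j).2.2 z (hzmem (j+1))
  have hup : (Nat.unpair j).1 = i := by rw [hjdef, Nat.unpair_pair]
  rw [hup] at hvisit
  refine ⟨NN j, ?_⟩
  have h2 : |(u i : ℝ) - x| < ε/2 := by rw [abs_sub_comm]; exact hi
  calc |S.T^[NN j] z - x|
      = |(S.T^[NN j] z - (u i : ℝ)) + ((u i : ℝ) - x)| := by ring_nf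
    _ ≤ |S.T^[NN j] z - (u i : ℝ)| + |(u i : ℝ) - x| := abs_add_le _ _
    _ < ε := by linarith [hvisit, h1j, hk₀]

end SawMapSetup



/-- `A` is a chaotic invariant set for `T`: `A` is closed and invariant, periodic points of
`T` are dense in `A`, `T` has sensitive dependence on initial conditions on `A`, and some
point of `A` has a dense forward orbit in `A`. -/
def IsChaoticInvariantSet (T : ℝ → ℝ) (A : Set ℝ) : Prop :=
  IsClosed A ∧ Set.MapsTo T A A ∧
    (∀ x ∈ A, ∀ ε > 0, ∃ y ∈ A, |x - y| < ε ∧ ∃ n, 1 ≤ n ∧ T^[n] y = y) ∧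
    (∃ b > 0, ∀ x ∈ A, ∀ ε > 0, ∃ y ∈ A, |x - y| < ε ∧ ∃ k : ℕ, b < |T^[k] x - T^[k] y|) ∧
    (∃ z ∈ A, ∀ x ∈ A, ∀ ε > 0, ∃ n : ℕ, |T^[n] z - x| < ε)


/-- Under the saw map setup, `Σ` is a chaotic invariant set for `T`. -/
theorem Sig_chaotic (S : SawMapSetup) :
    IsChaoticInvariantSet S.T S.Sig :=
  ⟨isClosed_closure, S.T_maps_Sig, S.periodic_dense, S.sensitive, S.dense_orbit⟩
end

section
/- Under the skew tent map setup, let f := min{x > e : T(x) = e}. If 1/α + 1/β ≥ 1, then f ≥ p and the segment [e, p] is invariant, i.e., T([e, p]) ⊆ [e, p]. If 1/α + 1/β < 1, then f < p and [e, p] is not invariant; in fact T(p) < e. -/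
/-- Skew tent map: invariance of `[e, p]` is equivalent to `1/α + 1/β ≥ 1`, in terms of
`f = min {x > e : T x = e}`. -/
theorem skew_tent_invariance_criterion
    (e r α β p : ℝ) (T : ℝ → ℝ)
    (her : e < r) (hα : 1 < α) (hβ : 0 < β)
    (hp : p = e + α * (r - e))
    (hT1 : ∀ x ≤ r, T x = e + α * (x - e))
    (hT2 : ∀ x ≥ r, T x = p - β * (x - r)) :
    (1 ≤ 1 / α + 1 / β →
      p ≤ sInf {x : ℝ | e < x ∧ T x = e} ∧
      Set.MapsTo T (Set.Icc e p) (Set.Icc e p)) ∧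
    (1 / α + 1 / β < 1 →
      sInf {x : ℝ | e < x ∧ T x = e} < p ∧
      ¬ Set.MapsTo T (Set.Icc e p) (Set.Icc e p) ∧
      T p < e) := by
  have hα0 : (0:ℝ) < α := by linarith
  set f0 : ℝ := r + α * (r - e) / β with hf0
  have hrf0 : r < f0 := by
    have : 0 < α * (r - e) / β := div_pos (by nlinarith) hβ
    simp only [hf0]; linarith
  have hep : e < p := by nlinarith
  have hS : {x : ℝ | e < x ∧ T x = e} = {f0} := by
    ext x
    simp only [Set.mem_setOf_eq, Set.mem_singleton_iff]
    constructor
    · rintro ⟨hex, hTx⟩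
      rcases le_or_gt x r with hxr | hxr
      · rw [hT1 x hxr] at hTx
        nlinarith
      · rw [hT2 x hxr.le, hp] at hTx
        rw [hf0]
        field_simp
        linarith
    · rintro rfl
      refine ⟨by linarith, ?_⟩
      rw [hT2 f0 hrf0.le, hf0, hp]
      field_simp
      ring

  have hInf : sInf {x : ℝ | e < x ∧ T x = e} = f0 := by rw [hS, csInf_singleton]
  constructor
  · intro h1
    have key : α * β ≤ α + β := by
      have h' : 1 ≤ 1/α + 1/β := h1
      rw [div_add_div _ _ (ne_of_gt hα0) (ne_of_gt hβ), le_div_iff₀ (by positivity)] at h'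
      linarith
    have hpf : p ≤ f0 := by
      rw [hf0, hp, ← sub_nonneg]
      have : r + α * (r - e) / β - (e + α * (r - e)) = ((α + β - α * β) * (r - e)) / β := by
        field_simp; ring
      rw [this]
      apply div_nonneg _ hβ.le
      nlinarith
    refine ⟨hInf ▸ hpf, ?_⟩
    rintro x ⟨hex, hxp⟩
    rcases le_or_gt x r with hxr | hxr
    · rw [hT1 x hxr]
      constructor
      · nlinarith
      · rw [hp]; nlinarith
    · rw [hT2 x hxr.le]
      constructor
      · have hxf : x ≤ f0 := le_trans hxp hpf
        rw [hf0] at hxf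
        have : β * (x - r) ≤ α * (r - e) := by
          have := (le_div_iff₀ hβ).mp (by linarith : x - r ≤ α * (r - e) / β)
          linarith [this]
        rw [hp]; linarith
      · nlinarith
  · intro h1
    have key : α + β < α * β := by
      rw [div_add_div _ _ (ne_of_gt hα0) (ne_of_gt hβ), div_lt_iff₀ (by positivity)] at h1
      linarith
    have hfp : f0 < p := by
      rw [hf0, hp, ← sub_pos]
      have : (e + α * (r - e)) - (r + α * (r - e) / β) = ((α * β - α - β) * (r - e)) / β := by
        field_simp; ring
      rw [this]
      apply div_pos _ hβ
      nlinarith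
    have hTp : T p < e := by
      rw [hT2 p (by rw [hp]; nlinarith), hp]
      nlinarith
    exact ⟨hInf ▸ hfp, fun h => absurd ((h ⟨hep.le, le_refl p⟩).1) (by linarith), hTp⟩
end

section
/- Under the skew tent map setup, assume β < 1. Then T([e, p]) ⊆ [e, p], and for every x ∈ (e, p] the iterates Tⁿ(x) converge to the fixed point ê as n → ∞; i.e., [e, p] \ {e} belongs to the basin of attraction of the stable fixed point ê. -/
/-- Skew tent map with `β < 1`: `[e, p]` is invariant and `[e, p] \ {e}` lies in the basin
of attraction of the stable fixed point `ê = (p + βr)/(1 + β)`. -/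
theorem skew_tent_attracting_fixed_point
    (e r α β p ehat : ℝ) (T : ℝ → ℝ)
    (her : e < r) (hα : 1 < α) (hβ : 0 < β) (hβ1 : β < 1)
    (hp : p = e + α * (r - e))
    (hehat : ehat = (p + β * r) / (1 + β))
    (hT1 : ∀ x ≤ r, T x = e + α * (x - e))
    (hT2 : ∀ x ≥ r, T x = p - β * (x - r)) :
    Set.MapsTo T (Set.Icc e p) (Set.Icc e p) ∧
    ∀ x ∈ Set.Ioc e p,
      Filter.Tendsto (fun n => T^[n] x) Filter.atTop (nhds ehat) := by
  have hre : (0:ℝ) < r - e := sub_pos.mpr her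
  have hpr : r < p := by nlinarith
  have hep : e < p := her.trans hpr
  have hrhat : r < ehat := by
    rw [hehat, lt_div_iff₀ (by linarith)]; nlinarith
  have hhatp : ehat ≤ p := by
    rw [hehat, div_le_iff₀ (by linarith)]; nlinarith
  -- [e,p] invariant
  have hmaps : Set.MapsTo T (Set.Icc e p) (Set.Icc e p) := by
    intro x hx
    rcases le_total x r with h | h
    · rw [Set.mem_Icc, hT1 x h]
      constructor <;> nlinarith [hx.1, hx.2]
    · rw [Set.mem_Icc, hT2 x h]
      constructor <;> nlinarith [hx.1, hx.2]
  -- [r,p] invariant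
  have hmaps2 : ∀ x ∈ Set.Icc r p, T x ∈ Set.Icc r p := by
    intro x hx
    rw [Set.mem_Icc, hT2 x hx.1]
    constructor <;> nlinarith [hx.1, hx.2]
  -- contraction estimate on [r,p]
  have hcontr : ∀ x ∈ Set.Icc r p, ∀ n : ℕ,
      T^[n] x ∈ Set.Icc r p ∧ |T^[n] x - ehat| ≤ β ^ n * |x - ehat| := by
    intro x hx n
    induction n with
    | zero => simpa using hx
    | succ n ih =>
      obtain ⟨hmem, hd⟩ := ih
      rw [Function.iterate_succ_apply']
      refine ⟨hmaps2 _ hmem, ?_⟩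
      have hfix : ehat * (1 + β) = p + β * r := by
        rw [hehat]; field_simp
      have key : T (T^[n] x) - ehat = -β * (T^[n] x - ehat) := by
        rw [hT2 _ hmem.1]; nlinarith [hfix]
      rw [key, abs_mul, abs_neg, abs_of_pos hβ]
      calc β * |T^[n] x - ehat| ≤ β * (β ^ n * |x - ehat|) :=
            mul_le_mul_of_nonneg_left hd hβ.le
        _ = β ^ (n + 1) * |x - ehat| := by ring
  -- convergence from [r,p]
  have htend : ∀ x ∈ Set.Icc r p,
      Filter.Tendsto (fun n => T^[n] x) Filter.atTop (nhds ehat) := by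
    intro x hx
    have h0 : Filter.Tendsto (fun n : ℕ => β ^ n * |x - ehat|) Filter.atTop (nhds 0) := by
      have := tendsto_pow_atTop_nhds_zero_of_lt_one hβ.le hβ1
      simpa using this.mul_const |x - ehat|
    rw [tendsto_iff_dist_tendsto_zero]
    exact squeeze_zero (fun n => dist_nonneg)
      (fun n => by rw [Real.dist_eq]; exact (hcontr x hx n).2) h0
  -- escape lemma
  have hesc : ∀ n : ℕ, ∀ x ∈ Set.Ioc e p, r - e < α ^ n * (x - e) →
      ∃ N, T^[N] x ∈ Set.Icc r p := by
    intro n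
    induction n with
    | zero =>
      intro x hx h
      refine ⟨0, ?_⟩
      simp only [Function.iterate_zero_apply, Set.mem_Icc]
      constructor
      · nlinarith [hx.1]
      · exact hx.2
    | succ n ih =>
      intro x hx h
      rcases le_total r x with hr | hr
      · exact ⟨0, by simpa using ⟨hr, hx.2⟩⟩
      · have hTx : T x = e + α * (x - e) := hT1 x hr
        have hTx_mem : T x ∈ Set.Ioc e p := by
          rw [Set.mem_Ioc, hTx]
          constructor
          · nlinarith [hx.1]
          · nlinarith [hx.1]
        have h2 : r - e < α ^ n * (T x - e) := by
          rw [hTx]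
          calc r - e < α ^ (n + 1) * (x - e) := h
            _ = α ^ n * (e + α * (x - e) - e) := by rw [pow_succ]; ring
        obtain ⟨N, hN⟩ := ih (T x) hTx_mem h2
        exact ⟨N + 1, by rwa [Function.iterate_succ_apply]⟩
  refine ⟨hmaps, ?_⟩
  intro x hx
  have hxe : 0 < x - e := sub_pos.mpr hx.1
  obtain ⟨n, hn⟩ := pow_unbounded_of_one_lt ((r - e) / (x - e)) hα
  have hn' : r - e < α ^ n * (x - e) := by
    rw [div_lt_iff₀ hxe] at hn; linarith
  obtain ⟨N, hN⟩ := hesc n x hx hn'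
  have ht := htend (T^[N] x) hN
  have heq : (fun k => T^[k] (T^[N] x)) = fun k => T^[k + N] x := by
    funext k; rw [Function.iterate_add_apply]
  rw [heq] at ht
  exact (Filter.tendsto_add_atTop_iff_nat N).mp ht
end

section
/- Under the skew tent map setup, assume β > 1 and 1/α + 1/β ≥ 1. Then T([e, p]) ⊆ [e, p]; the segment G := [T(p), p] satisfies T(G) ⊆ G; and for every y ∈ (e, p] there exists n₁ ∈ ℕ such that Tⁿ(y) ∈ G for all n ≥ n₁. -/
/-- Skew tent map with `β > 1` and `1/α + 1/β ≥ 1`: `[e, p]` is invariant, the segment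
`G = [T p, p]` is invariant, and every trajectory starting in `(e, p]` eventually stays
in `G`. -/
theorem skew_tent_absorbing_interval
    (e r α β p : ℝ) (T : ℝ → ℝ)
    (her : e < r) (hα : 1 < α) (hβ : 1 < β)
    (hslope : 1 ≤ 1 / α + 1 / β)
    (hp : p = e + α * (r - e))
    (hT1 : ∀ x ≤ r, T x = e + α * (x - e))
    (hT2 : ∀ x ≥ r, T x = p - β * (x - r)) :
    Set.MapsTo T (Set.Icc e p) (Set.Icc e p) ∧
    Set.MapsTo T (Set.Icc (T p) p) (Set.Icc (T p) p) ∧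
    ∀ y ∈ Set.Ioc e p, ∃ n₁ : ℕ, ∀ n, n₁ ≤ n → T^[n] y ∈ Set.Icc (T p) p := by
  have hα0 : (0:ℝ) < α := by linarith
  have hβ0 : (0:ℝ) < β := by linarith
  have hab : α * β ≤ α + β := by
    have h1 : 1/α + 1/β = (β + α) / (α*β) := by field_simp
    rw [h1, le_div_iff₀ (by positivity)] at hslope
    linarith
  have hrp : r < p := by nlinarith
  have hTp : T p = p - β * (p - r) := hT2 p (le_of_lt hrp)
  have heTp : e ≤ T p := by rw [hTp, hp]; nlinarith
  have hTpr : T p ≤ r := by rw [hTp]; nlinarith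
  have maps1 : Set.MapsTo T (Set.Icc e p) (Set.Icc e p) := by
    intro x hx
    obtain ⟨hx1, hx2⟩ := hx
    rcases le_total x r with h | h
    · rw [hT1 x h]; constructor <;> nlinarith
    · rw [hT2 x h]
      have h' := heTp
      rw [hTp] at h'
      constructor <;> nlinarith
  have maps2 : Set.MapsTo T (Set.Icc (T p) p) (Set.Icc (T p) p) := by
    intro x hx
    obtain ⟨hx1, hx2⟩ := hx
    rcases le_total x r with h | h
    · rw [hT1 x h]
      have hex : e ≤ x := le_trans heTp hx1
      constructor
      · nlinarith
      · nlinarith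
    · rw [hT2 x h, hTp]
      constructor <;> nlinarith
  refine ⟨maps1, maps2, ?_⟩
  intro y hy
  obtain ⟨hy1, hy2⟩ := hy
  have hiter : ∀ n, T^[n] y ∈ Set.Icc e p := by
    intro n
    induction n with
    | zero => exact ⟨le_of_lt hy1, hy2⟩
    | succ n ih => rw [Function.iterate_succ_apply']; exact maps1 ih
  have hye : 0 < y - e := by linarith
  obtain ⟨N, hN⟩ := pow_unbounded_of_one_lt ((p - e)/(y - e)) hα
  have hNgt : p - e < α ^ N * (y - e) := by
    rw [div_lt_iff₀ hye] at hN; linarith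
  by_cases hcase : ∃ m, T p ≤ T^[m] y
  · obtain ⟨m, hm⟩ := hcase
    refine ⟨m, ?_⟩
    have aux : ∀ k, T^[m + k] y ∈ Set.Icc (T p) p := by
      intro k
      induction k with
      | zero => exact ⟨hm, (hiter m).2⟩
      | succ k ih =>
        rw [show m + (k+1) = (m+k) + 1 from rfl, Function.iterate_succ_apply']
        exact maps2 ih
    intro n hn
    obtain ⟨k, rfl⟩ := Nat.exists_eq_add_of_le hn
    exact aux k
  · exfalso
    push_neg at hcase
    have key : ∀ m, T^[m] y - e = α ^ m * (y - e) := by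
      intro m
      induction m with
      | zero => simp
      | succ m ih =>
        have h1 : T^[m] y ≤ r := le_trans (le_of_lt (hcase m)) hTpr
        rw [Function.iterate_succ_apply', hT1 _ h1, pow_succ]
        nlinarith [ih]
    have h1 := key N
    have h2 := (hiter N).2
    nlinarith
end

section
/- Under the skew tent map setup, assume β > 1, 1/α + 1/β > 1 and (1/β)·(1/α + 1/β) < 1. Then for every closed interval Δ ⊆ G := [T(p), p] with nonempty interior there exists m ∈ ℕ such that T^m(Δ) = G; consequently, G is a chaotic invariant set for T. -/
set_option maxHeartbeats 4000000 in
/-- Skew tent map with `β > 1`, `1/α + 1/β > 1` and `(1/β)(1/α + 1/β) < 1`: every closed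
subinterval of `G = [T p, p]` with nonempty interior is mapped onto `G` by some iterate of
`T`; consequently `G` is a chaotic invariant set for `T`. -/
theorem skew_tent_locally_eventually_onto
    (e r α β p : ℝ) (T : ℝ → ℝ)
    (her : e < r) (hα : 1 < α) (hβ : 1 < β)
    (hslope : 1 < 1 / α + 1 / β)
    (hslope2 : (1 / β) * (1 / α + 1 / β) < 1)
    (hp : p = e + α * (r - e))
    (hT1 : ∀ x ≤ r, T x = e + α * (x - e))
    (hT2 : ∀ x ≥ r, T x = p - β * (x - r)) :
    (∀ a b : ℝ, T p ≤ a → a < b → b ≤ p →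
      ∃ m : ℕ, T^[m] '' Set.Icc a b = Set.Icc (T p) p) ∧
    IsChaoticInvariantSet T (Set.Icc (T p) p) := by
  have hα0 : (0:ℝ) < α := by linarith
  have hβ0 : (0:ℝ) < β := by linarith
  have hrp : r < p := by nlinarith
  have hTpv : T p = p - β * (p - r) := hT2 p hrp.le
  have hTpr : T p < r := by rw [hTpv]; nlinarith
  have hinvα : α * (1/α) = 1 := by field_simp
  have hinvβ : β * (1/β) = 1 := by field_simp
  have hαβ : α * β < α + β := by
    nlinarith [mul_lt_mul_of_pos_left hslope (mul_pos hα0 hβ0), hinvα, hinvβ]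
  have heTp : e < T p := by rw [hTpv]; nlinarith
  have hTpp : T p < p := lt_trans hTpr hrp
  -- slope quantities
  -- image lemmas
  have imgL : ∀ c d : ℝ, c ≤ d → d ≤ r →
      T '' Set.Icc c d = Set.Icc (e + α * (c - e)) (e + α * (d - e)) := by
    intro c d hcd hdr
    ext y
    simp only [Set.mem_image, Set.mem_Icc]
    constructor
    · rintro ⟨x, ⟨hx1, hx2⟩, rfl⟩
      rw [hT1 x (hx2.trans hdr)]
      constructor <;> nlinarith
    · rintro ⟨h2, h3⟩
      have hxd : e + (y - e) / α ≤ d := by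
        rw [← le_sub_iff_add_le', div_le_iff₀ hα0]; nlinarith
      have hxc : c ≤ e + (y - e) / α := by
        rw [← sub_le_iff_le_add', le_div_iff₀ hα0]; nlinarith
      refine ⟨e + (y - e) / α, ⟨hxc, hxd⟩, ?_⟩
      rw [hT1 _ (hxd.trans hdr)]
      field_simp
      try ring
  have imgR : ∀ c d : ℝ, r ≤ c → c ≤ d →
      T '' Set.Icc c d = Set.Icc (p - β * (d - r)) (p - β * (c - r)) := by
    intro c d hrc hcd
    ext y
    simp only [Set.mem_image, Set.mem_Icc]
    constructor
    · rintro ⟨x, ⟨hx1, hx2⟩, rfl⟩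
      rw [hT2 x (hrc.trans hx1)]
      constructor <;> nlinarith
    · rintro ⟨h2, h3⟩
      have hxc : c ≤ r + (p - y) / β := by
        rw [← sub_le_iff_le_add', le_div_iff₀ hβ0]; nlinarith
      have hxd : r + (p - y) / β ≤ d := by
        rw [← le_sub_iff_add_le', div_le_iff₀ hβ0]; nlinarith
      have hpy : (0:ℝ) ≤ p - y := by nlinarith
      have hyr : r + (p - y) / β ≥ r := le_add_of_nonneg_right (div_nonneg hpy hβ0.le)
      refine ⟨r + (p - y) / β, ⟨hxc, hxd⟩, ?_⟩
      rw [hT2 _ hyr]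
      field_simp
      try ring
  -- value bounds
  have hTleP : ∀ x ≤ r, e + α * (x - e) ≤ p := by intro x hx; nlinarith
  have hTgeTp : ∀ x, T p ≤ x → x ≤ r → T p ≤ e + α * (x - e) := by
    intro x h1 h2; nlinarith
  -- fold image
  have imgF : ∀ c d : ℝ, c ≤ r → r ≤ d → d ≤ p →
      T '' Set.Icc c d = Set.Icc (min (e + α * (c - e)) (p - β * (d - r))) p := by
    intro c d hcr hrd hdp
    have : Set.Icc c d = Set.Icc c r ∪ Set.Icc r d := (Set.Icc_union_Icc_eq_Icc hcr hrd).symm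
    rw [this, Set.image_union, imgL c r hcr le_rfl, imgR r d le_rfl hrd]
    have h1 : e + α * (r - e) = p := hp.symm
    have h2 : p - β * (r - r) = p := by ring_nf
    rw [h1, h2]
    ext z
    simp only [Set.mem_union, Set.mem_Icc, min_le_iff]
    constructor
    · rintro (⟨hz1, hz2⟩ | ⟨hz1, hz2⟩)
      · exact ⟨Or.inl hz1, hz2⟩
      · exact ⟨Or.inr hz1, hz2⟩
    · rintro ⟨hz1 | hz1, hz2⟩
      · exact Or.inl ⟨hz1, hz2⟩
      · exact Or.inr ⟨hz1, hz2⟩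
  obtain ⟨σ, hσ⟩ : ∃ σ : ℝ, σ = 1/α + 1/β := ⟨_, rfl⟩
  have hσ0 : 0 < σ := by rw [hσ]; positivity
  have hσ1 : 1 < σ := by rw [hσ]; exact hslope
  have hσβ : σ < β := by
    have h' : (1/β) * σ < 1 := by rw [hσ]; exact hslope2
    nlinarith [mul_lt_mul_of_pos_left h' hβ0, hinvβ]
  obtain ⟨μ, hμ⟩ : ∃ μ : ℝ, μ = min (min α β) (β / σ) := ⟨_, rfl⟩
  have hμ1 : 1 < μ := by
    rw [hμ]
    apply lt_min (lt_min hα hβ)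
    rw [lt_div_iff₀ hσ0]; linarith
  have hμα : μ ≤ α := hμ ▸ le_trans (min_le_left _ _) (min_le_left _ _)
  have hμβ : μ ≤ β := hμ ▸ le_trans (min_le_left _ _) (min_le_right _ _)
  have hμσβ : μ * σ ≤ β := by
    have h' : μ ≤ β / σ := hμ ▸ min_le_right _ _
    calc μ * σ ≤ (β/σ) * σ := mul_le_mul_of_nonneg_right h' hσ0.le
    _ = β := div_mul_cancel₀ _ (ne_of_gt hσ0)
  have hμ0 : 0 < μ := by linarith
  -- key induction
  have key : ∀ n : ℕ, ∀ a b : ℝ, T p ≤ a → a < b → b ≤ p →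
      p - T p < μ ^ n * (b - a) → ∃ m : ℕ, T^[m] '' Set.Icc a b = Set.Icc (T p) p := by
    intro n
    induction n with
    | zero => intro a b h1 h2 h3 h4; simp at h4; linarith
    | succ n ih =>
      intro a b h1 h2 h3 h4
      have hba : 0 < b - a := by linarith
      rcases le_or_gt b r with hbr | hrb
      · -- left branch
        obtain ⟨m, hm⟩ := ih (e + α * (a - e)) (e + α * (b - e))
          (hTgeTp a h1 (by linarith)) (by nlinarith) (hTleP b hbr)
          (by
            have hlen : μ * (b - a) ≤ (e + α * (b - e)) - (e + α * (a - e)) := by nlinarith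
            have := pow_pos hμ0 n
            calc p - T p < μ ^ (n+1) * (b - a) := h4
            _ = μ ^ n * (μ * (b - a)) := by ring
            _ ≤ μ ^ n * ((e + α * (b - e)) - (e + α * (a - e))) := by nlinarith)
        refine ⟨m + 1, ?_⟩
        rw [Function.iterate_succ, Set.image_comp, imgL a b h2.le hbr, hm]
      rcases le_or_gt r a with hra | har
      · -- right branch
        obtain ⟨m, hm⟩ := ih (p - β * (b - r)) (p - β * (a - r))
          (by rw [hTpv]; nlinarith) (by nlinarith) (by nlinarith)
          (by
            have hlen : μ * (b - a) ≤ (p - β * (a - r)) - (p - β * (b - r)) := by nlinarith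
            have := pow_pos hμ0 n
            calc p - T p < μ ^ (n+1) * (b - a) := h4
            _ = μ ^ n * (μ * (b - a)) := by ring
            _ ≤ _ := by nlinarith)
        refine ⟨m + 1, ?_⟩
        rw [Function.iterate_succ, Set.image_comp, imgR a b hra h2.le, hm]
      · -- fold
        set m₁ : ℝ := min (e + α * (a - e)) (p - β * (b - r)) with hm₁
        have himg1 : T '' Set.Icc a b = Set.Icc m₁ p := imgF a b har.le hrb.le h3
        have hm₁Tp : T p ≤ m₁ := le_min (hTgeTp a h1 har.le) (by rw [hTpv]; nlinarith)
        have hm₁p : m₁ < p := lt_of_le_of_lt (min_le_left _ _) (by nlinarith)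
        -- length estimate: p - m₁ = max (α(r-a)) (β(b-r)) ≥ (b-a)/σ
        have hlen : (b - a) ≤ σ * (p - m₁) := by
          have h5 : α * (r - a) ≤ p - m₁ := by
            have : m₁ ≤ e + α * (a - e) := min_le_left _ _
            nlinarith
          have h6 : β * (b - r) ≤ p - m₁ := by
            have : m₁ ≤ p - β * (b - r) := min_le_right _ _
            nlinarith
          have e1 : r - a ≤ (p - m₁) / α := by rw [le_div_iff₀ hα0]; nlinarith
          have e2 : b - r ≤ (p - m₁) / β := by rw [le_div_iff₀ hβ0]; nlinarith
          have : (p - m₁)/α + (p - m₁)/β = σ * (p - m₁) := by rw [hσ]; ring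
          linarith
        rcases le_or_gt m₁ r with hm₁r | hrm₁
        · -- second fold: T²(Icc a b) = G
          refine ⟨2, ?_⟩
          have h2i : T^[2] = T ∘ T := by
            rw [Function.iterate_succ, Function.iterate_one]
          rw [h2i, Set.image_comp, himg1, imgF m₁ p hm₁r hrp.le le_rfl, ← hTpv,
            min_eq_right (hTgeTp m₁ hm₁Tp hm₁r)]
        · -- right branch applied to [m₁, p], expansion by β/σ
          have himg2 : T '' Set.Icc m₁ p = Set.Icc (p - β * (p - r)) (p - β * (m₁ - r)) :=
            imgR m₁ p hrm₁.le hm₁p.le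
          obtain ⟨m, hm⟩ := ih (p - β * (p - r)) (p - β * (m₁ - r))
            (by rw [hTpv]) (by nlinarith) (by nlinarith)
            (by
              have hlen2 : μ * (b - a) ≤ (p - β * (m₁ - r)) - (p - β * (p - r)) := by
                have : μ * (b - a) ≤ μ * (σ * (p - m₁)) := by nlinarith
                have h7 : μ * (σ * (p - m₁)) ≤ β * (p - m₁) := by nlinarith
                nlinarith
              have := pow_pos hμ0 n
              calc p - T p < μ ^ (n+1) * (b - a) := h4
              _ = μ ^ n * (μ * (b - a)) := by ring
              _ ≤ _ := by nlinarith)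
          refine ⟨m + 2, ?_⟩
          have : T^[m + 2] = T^[m] ∘ T ∘ T := by
            rw [show m + 2 = (m + 1) + 1 from rfl, Function.iterate_succ, Function.iterate_succ]
            rfl
          rw [this, Set.image_comp, Set.image_comp, himg1, himg2, hm]
  -- the LEO statement
  have leo : ∀ a b : ℝ, T p ≤ a → a < b → b ≤ p →
      ∃ m : ℕ, T^[m] '' Set.Icc a b = Set.Icc (T p) p := by
    intro a b h1 h2 h3
    obtain ⟨n, hn⟩ := pow_unbounded_of_one_lt ((p - T p)/(b - a)) hμ1
    refine key n a b h1 h2 h3 ?_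
    rw [div_lt_iff₀ (by linarith : (0:ℝ) < b - a)] at hn
    linarith
  refine ⟨leo, ?_⟩
  -- continuity of T
  have hTmin : T = fun x => min (e + α * (x - e)) (p - β * (x - r)) := by
    funext x
    rcases le_total x r with h | h
    · rw [hT1 x h, eq_comm, min_eq_left_iff]; nlinarith
    · rw [hT2 x h, eq_comm, min_eq_right_iff]; nlinarith
  have hcont : Continuous T := by
    rw [hTmin]
    exact (continuous_const.add (continuous_const.mul (continuous_id.sub continuous_const))).min
      (continuous_const.sub (continuous_const.mul (continuous_id.sub continuous_const)))
  -- invariance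
  have hmaps : Set.MapsTo T (Set.Icc (T p) p) (Set.Icc (T p) p) := by
    intro x hx
    simp only [Set.mem_Icc] at hx ⊢
    rcases le_total x r with h | h
    · rw [hT1 x h]; exact ⟨hTgeTp x hx.1 h, hTleP x h⟩
    · rw [hT2 x h]
      constructor
      · rw [hTpv]; nlinarith [hx.2]
      · nlinarith
  -- T''G = G
  have hTG : T '' Set.Icc (T p) p = Set.Icc (T p) p := by
    rw [imgF (T p) p hTpr.le hrp.le le_rfl, ← hTpv,
      min_eq_right (hTgeTp (T p) le_rfl hTpr.le)]
  -- strengthened leo with m ≥ 1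
  have leo1 : ∀ a b : ℝ, T p ≤ a → a < b → b ≤ p →
      ∃ m : ℕ, 1 ≤ m ∧ T^[m] '' Set.Icc a b = Set.Icc (T p) p := by
    intro a b h1 h2 h3
    obtain ⟨m, hm⟩ := leo a b h1 h2 h3
    refine ⟨m + 1, le_add_self, ?_⟩
    rw [Function.iterate_succ', Set.image_comp, hm, hTG]
  have habLT : ∀ x : ℝ, x ∈ Set.Icc (T p) p → ∀ ε : ℝ, 0 < ε →
      max (T p) (x - ε/2) < min p (x + ε/2) := by
    intro x hx ε hε
    simp only [Set.mem_Icc] at hx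
    exact max_lt (lt_min hTpp (by linarith [hx.1])) (lt_min (by linarith [hx.2]) (by linarith))
  refine ⟨isClosed_Icc, hmaps, ?_, ?_, ?_⟩
  · -- dense periodic points
    intro x hx ε hε
    set a := max (T p) (x - ε/2) with ha
    set b := min p (x + ε/2) with hb
    have hab : a < b := habLT x hx ε hε
    obtain ⟨m, hm1, hm⟩ := leo1 a b (le_max_left _ _) hab (min_le_left _ _)
    have hsub : Set.Icc a b ⊆ Set.Icc (T p) p :=
      Set.Icc_subset_Icc (le_max_left _ _) (min_le_left _ _)
    have haG : a ∈ T^[m] '' Set.Icc a b := by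
      rw [hm]; exact hsub ⟨le_rfl, hab.le⟩
    have hbG : b ∈ T^[m] '' Set.Icc a b := by
      rw [hm]; exact hsub ⟨hab.le, le_rfl⟩
    obtain ⟨u, hu, hTu⟩ := haG
    obtain ⟨v, hv, hTv⟩ := hbG
    have hcm : Continuous (T^[m]) := hcont.iterate m
    have h0 : (0:ℝ) ∈ Set.uIcc (T^[m] u - u) (T^[m] v - v) :=
      Set.mem_uIcc.mpr (Or.inl ⟨by rw [hTu]; linarith [hu.1], by rw [hTv]; linarith [hv.2]⟩)
    obtain ⟨y, hy, hy0⟩ := intermediate_value_uIcc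
      (f := fun t => T^[m] t - t) ((hcm.sub continuous_id).continuousOn) h0
    have hyab : y ∈ Set.Icc a b := Set.uIcc_subset_Icc hu hv hy
    refine ⟨y, hsub hyab, ?_, m, hm1, by dsimp at hy0; linarith [hy0]⟩
    rw [abs_sub_lt_iff]
    constructor
    · linarith [hyab.1, le_max_right (T p) (x - ε/2)]
    · linarith [hyab.2, min_le_right p (x + ε/2)]
  · -- sensitivity
    refine ⟨(p - T p)/3, by linarith, ?_⟩
    intro x hx ε hε
    set a := max (T p) (x - ε/2) with ha
    set b := min p (x + ε/2) with hb
    have hab : a < b := habLT x hx ε hε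
    obtain ⟨m, _, hm⟩ := leo1 a b (le_max_left _ _) hab (min_le_left _ _)
    have hxm : T^[m] x ∈ Set.Icc (T p) p := hmaps.iterate m hx
    have hdist : ∀ y : ℝ, y ∈ Set.Icc a b → |x - y| < ε := by
      intro y hy
      rw [abs_sub_lt_iff]
      constructor
      · linarith [hy.1, le_max_right (T p) (x - ε/2)]
      · linarith [hy.2, min_le_right p (x + ε/2)]
    have hsub : Set.Icc a b ⊆ Set.Icc (T p) p :=
      Set.Icc_subset_Icc (le_max_left _ _) (min_le_left _ _)
    rcases le_or_gt (T^[m] x) ((T p + p)/2) with hc | hc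
    · have hpG : p ∈ T^[m] '' Set.Icc a b := by rw [hm]; exact ⟨hTpp.le, le_rfl⟩
      obtain ⟨y, hy, hTy⟩ := hpG
      refine ⟨y, hsub hy, hdist y hy, m, ?_⟩
      rw [hTy]
      have h1 : (p - T p)/3 < p - T^[m] x := by linarith
      calc (p - T p)/3 < p - T^[m] x := h1
      _ = -(T^[m] x - p) := by ring
      _ ≤ |T^[m] x - p| := neg_le_abs _
    · have hpG : T p ∈ T^[m] '' Set.Icc a b := by rw [hm]; exact ⟨le_rfl, hTpp.le⟩
      obtain ⟨y, hy, hTy⟩ := hpG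
      refine ⟨y, hsub hy, hdist y hy, m, ?_⟩
      rw [hTy]
      have h1 : (p - T p)/3 < T^[m] x - T p := by linarith
      calc (p - T p)/3 < T^[m] x - T p := h1
      _ ≤ |T^[m] x - T p| := le_abs_self _
  · -- dense orbit
    have hrefine : ∀ u v a' b' : ℝ, T p ≤ u → u < v → v ≤ p → T p ≤ a' → a' < b' → b' ≤ p →
        ∃ w : ℝ × ℝ × ℕ, u ≤ w.1 ∧ w.1 < w.2.1 ∧ w.2.1 ≤ v ∧
          ∀ x ∈ Set.Icc w.1 w.2.1, T^[w.2.2] x ∈ Set.Icc a' b' := by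
      intro u v a' b' h1 h2 h3 h4 h5 h6
      obtain ⟨m, hm⟩ := leo u v h1 h2 h3
      have hy0 : (a' + b')/2 ∈ Set.Icc (T p) p := ⟨by linarith, by linarith⟩
      rw [← hm] at hy0
      obtain ⟨y, hyuv, hTy⟩ := hy0
      have hcm : Continuous (T^[m]) := hcont.iterate m
      obtain ⟨δ, hδ0, hδ⟩ := Metric.continuous_iff.mp hcm y ((b' - a')/2) (by linarith)
      refine ⟨(max u (y - δ/2), min v (y + δ/2), m), le_max_left _ _, ?_, min_le_left _ _, ?_⟩
      · exact max_lt (lt_min h2 (by linarith [hyuv.1])) (lt_min (by linarith [hyuv.2]) (by linarith))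
      · intro x hx
        simp only [Set.mem_Icc] at hx
        have h7 : dist x y < δ := by
          rw [Real.dist_eq, abs_sub_lt_iff]
          refine ⟨?_, ?_⟩
          · have := hx.2.trans (min_le_right v (y + δ/2)); linarith
          · have := (le_max_right u (y - δ/2)).trans hx.1; linarith
        have h8 := hδ x h7
        rw [hTy, Real.dist_eq, abs_sub_lt_iff] at h8
        exact ⟨by linarith [h8.1], by linarith [h8.2]⟩
    -- countable family of targets
    set F : ℕ → ℚ × ℚ := fun n => (Denumerable.eqv (ℚ × ℚ)).symm n with hF
    set Jf : ℕ → ℝ × ℝ := fun n =>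
      if T p ≤ (((F n).1 : ℝ)) ∧ (((F n).1 : ℝ)) < ((F n).2 : ℝ) ∧ (((F n).2 : ℝ)) ≤ p
      then (((F n).1 : ℝ), ((F n).2 : ℝ)) else (T p, p) with hJf
    have hJ : ∀ n, T p ≤ (Jf n).1 ∧ (Jf n).1 < (Jf n).2 ∧ (Jf n).2 ≤ p := by
      intro n
      rw [hJf]
      dsimp only
      split_ifs with h
      · exact h
      · exact ⟨le_rfl, hTpp, le_rfl⟩
    have hstep : ∀ (n : ℕ) (q : {q : ℝ × ℝ // T p ≤ q.1 ∧ q.1 < q.2 ∧ q.2 ≤ p}),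
        ∃ w : {q : ℝ × ℝ // T p ≤ q.1 ∧ q.1 < q.2 ∧ q.2 ≤ p} × ℕ,
          q.1.1 ≤ w.1.1.1 ∧ w.1.1.2 ≤ q.1.2 ∧
          ∀ x ∈ Set.Icc w.1.1.1 w.1.1.2, T^[w.2] x ∈ Set.Icc (Jf n).1 (Jf n).2 := by
      intro n q
      obtain ⟨w, h1, h2, h3, h4⟩ := hrefine q.1.1 q.1.2 (Jf n).1 (Jf n).2
        q.2.1 q.2.2.1 q.2.2.2 (hJ n).1 (hJ n).2.1 (hJ n).2.2
      exact ⟨⟨⟨(w.1, w.2.1), q.2.1.trans h1, h2, h3.trans q.2.2.2⟩, w.2.2⟩, h1, h3, h4⟩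
    let seq : ℕ → ({q : ℝ × ℝ // T p ≤ q.1 ∧ q.1 < q.2 ∧ q.2 ≤ p} × ℕ) := fun n =>
      Nat.rec (⟨⟨(T p, p), le_rfl, hTpp, le_rfl⟩, 0⟩)
        (fun k ih => Classical.choose (hstep k ih.1)) n
    have hseq : ∀ n, seq (n + 1) = Classical.choose (hstep n (seq n).1) := fun n => rfl
    set u : ℕ → ℝ := fun n => (seq n).1.1.1 with hu
    set v : ℕ → ℝ := fun n => (seq n).1.1.2 with hv
    have hq : ∀ n, T p ≤ u n ∧ u n < v n ∧ v n ≤ p := fun n => (seq n).1.2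
    have hspec : ∀ n, u n ≤ u (n+1) ∧ v (n+1) ≤ v n ∧
        ∀ x ∈ Set.Icc (u (n+1)) (v (n+1)), T^[(seq (n+1)).2] x ∈ Set.Icc (Jf n).1 (Jf n).2 := by
      intro n
      have := Classical.choose_spec (hstep n (seq n).1)
      rw [← hseq n] at this
      exact this
    have humono : Monotone u := monotone_nat_of_le_succ (fun n => (hspec n).1)
    have hvanti : Antitone v := antitone_nat_of_succ_le (fun n => (hspec n).2.1)
    have hbdd : BddAbove (Set.range u) := by
      refine ⟨p, ?_⟩
      rintro _ ⟨n, rfl⟩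
      exact ((hq n).2.1.le).trans (hq n).2.2
    set z : ℝ := ⨆ n, u n with hz
    have hz1 : ∀ n, u n ≤ z := fun n => le_ciSup hbdd n
    have hz2 : ∀ n, z ≤ v n := by
      intro n
      refine ciSup_le (fun m => ?_)
      rcases le_total m n with h | h
      · exact (humono h).trans (hq n).2.1.le
      · exact (hq m).2.1.le.trans (hvanti h)
    have hu0 : u 0 = T p := rfl
    have hv0 : v 0 = p := rfl
    refine ⟨z, ⟨hu0 ▸ hz1 0, hv0 ▸ hz2 0⟩, ?_⟩
    intro x hx ε hε
    have hab : max (T p) (x - ε/2) < min p (x + ε/2) := habLT x hx ε hε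
    obtain ⟨q1, hq1a, hq1b⟩ := exists_rat_btwn hab
    obtain ⟨q2, hq2a, hq2b⟩ := exists_rat_btwn hq1b
    obtain ⟨n, hn⟩ := (Denumerable.eqv (ℚ × ℚ)).symm.surjective (q1, q2)
    have hcond : T p ≤ ((q1:ℝ)) ∧ ((q1:ℝ)) < ((q2:ℝ)) ∧ ((q2:ℝ)) ≤ p := by
      refine ⟨(le_max_left (T p) (x - ε/2)).trans hq1a.le, ?_, ?_⟩
      · exact_mod_cast hq2a
      · exact hq2b.le.trans (min_le_left _ _)
    have hJn : Jf n = ((q1:ℝ), (q2:ℝ)) := by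
      rw [hJf]
      dsimp only
      rw [hF]
      dsimp only
      simp only [hn]
      rw [if_pos hcond]
    refine ⟨(seq (n+1)).2, ?_⟩
    have hzn : z ∈ Set.Icc (u (n+1)) (v (n+1)) := ⟨hz1 (n+1), hz2 (n+1)⟩
    have hmem := (hspec n).2.2 z hzn
    rw [hJn] at hmem
    simp only [Set.mem_Icc] at hmem
    rw [abs_sub_lt_iff]
    constructor
    · have h1 := hq2b.trans_le (min_le_right p (x + ε/2))
      linarith [hmem.2]
    · have h2 := (le_max_right (T p) (x - ε/2)).trans_lt hq1a
      linarith [hmem.1]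
end

section
/- Under the skew tent map setup, assume β > 1 and (1/β)·(1/α + 1/β) > 1 (equivalently 1/β² + 1/(αβ) > 1). Then the segment J' := [ê, p] satisfies T(J') = [T(p), ê], so T(J') ∩ J' = {ê}, and J' is invariant under the second iterate: T²(J') ⊆ J'. Moreover, the restriction of T² to J' is piecewise affine with exactly two slopes, β² on the increasing branch and −αβ on the decreasing branch. -/
set_option maxHeartbeats 800000

/-- Skew tent map with `β > 1` and `(1/β)(1/α + 1/β) > 1`: the segment `J' = [ê, p]`
satisfies `T(J') = [T p, ê]` (so `T(J') ∩ J' = {ê}`), `J'` is invariant under `T²`, and the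
restriction of `T²` to `J'` is piecewise affine with exactly two slopes: `β²` on the
increasing branch and `-αβ` on the decreasing branch. -/
theorem skew_tent_second_iterate
    (e r α β p ehat : ℝ) (T : ℝ → ℝ)
    (her : e < r) (hα : 1 < α) (hβ : 1 < β)
    (hslope : 1 < (1 / β) * (1 / α + 1 / β))
    (hp : p = e + α * (r - e))
    (hehat : ehat = (p + β * r) / (1 + β))
    (hT1 : ∀ x ≤ r, T x = e + α * (x - e))
    (hT2 : ∀ x ≥ r, T x = p - β * (x - r)) :
    T '' Set.Icc ehat p = Set.Icc (T p) ehat ∧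
    (T '' Set.Icc ehat p) ∩ Set.Icc ehat p = {ehat} ∧
    Set.MapsTo (fun x => T (T x)) (Set.Icc ehat p) (Set.Icc ehat p) ∧
    ∃ v : ℝ, v ∈ Set.Ioo ehat p ∧ T v = r ∧
      (∀ x ∈ Set.Icc ehat v, T (T x) = T (T ehat) + β ^ 2 * (x - ehat)) ∧
      (∀ x ∈ Set.Icc v p, T (T x) = T (T v) - (α * β) * (x - v)) := by
  have hβ0 : (0:ℝ) < β := by linarith
  have hα0 : (0:ℝ) < α := by linarith
  have h1β : (0:ℝ) < 1 + β := by linarith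
  have hβne : β ≠ 0 := ne_of_gt hβ0
  have h1βne : (1:ℝ) + β ≠ 0 := ne_of_gt h1β
  have hrp : r < p := by nlinarith
  have hfixeq : ehat * (1 + β) = p + β * r := by
    rw [hehat]; field_simp
  have hre : r < ehat := by nlinarith
  have hep : ehat < p := by nlinarith
  have hαβ2 : (0:ℝ) < α * β ^ 2 := by positivity
  have hkey : α * β ^ 2 < α + β := by
    have h2 : (1 / β) * (1 / α + 1 / β) * (α * β ^ 2) = α + β := by
      field_simp; ring
    nlinarith [mul_lt_mul_of_pos_right hslope hαβ2]
  set v : ℝ := r + (p - r) / β with hvdef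
  have hv1 : (v - r) * β = p - r := by
    rw [hvdef]; field_simp; ring
  have h5 : (v - ehat) * (β * (1 + β)) = p - r := by
    linear_combination (1 + β) * hv1 - β * hfixeq
  have hev : ehat < v := by nlinarith [h5, mul_pos hβ0 h1β]
  have hrv : r < v := by nlinarith [hv1]
  have h6 : (p - v) * β = (p - r) * (β - 1) := by linear_combination -hv1
  have hvp : v < p := by nlinarith [h6, mul_pos (sub_pos.2 hrp) (show (0:ℝ) < β - 1 by linarith)]
  have hTehat : T ehat = ehat := by
    rw [hT2 ehat (le_of_lt hre)]; linear_combination -hfixeq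
  have hTr : T r = p := by
    rw [hT2 r le_rfl]; ring
  have hTv : T v = r := by
    rw [hT2 v (le_of_lt hrv)]; linear_combination -hv1
  have hTp : T p = p - β * (p - r) := hT2 p (le_of_lt hrp)
  -- branch formulas
  have hB1 : ∀ x ∈ Set.Icc ehat v, T (T x) = ehat + β ^ 2 * (x - ehat) := by
    rintro x ⟨hx1, hx2⟩
    have hxr : r ≤ x := le_trans (le_of_lt hre) hx1
    rw [hT2 x hxr]
    have hvx : 0 ≤ β * (v - x) := mul_nonneg (le_of_lt hβ0) (by linarith)
    have hTxr : p - β * (x - r) ≥ r := by linarith [hv1, hvx]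
    rw [hT2 _ hTxr]
    linear_combination (β - 1) * hfixeq
  have hB2 : ∀ x ∈ Set.Icc v p, T (T x) = p - (α * β) * (x - v) := by
    rintro x ⟨hx1, hx2⟩
    have hxr : r ≤ x := le_trans (le_of_lt hrv) hx1
    rw [hT2 x hxr]
    have hvx : 0 ≤ β * (x - v) := mul_nonneg (le_of_lt hβ0) (by linarith)
    have hTxr : p - β * (x - r) ≤ r := by linarith [hv1, hvx]
    rw [hT1 _ hTxr]
    linear_combination (-1 : ℝ) * hp + (-α) * hv1
  have hpe : (p - ehat) * (1 + β) = β * (p - r) := by linear_combination -hfixeq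
  have hstep : α * β * (p - v) = α * (β - 1) * (p - r) := by
    linear_combination (-α) * hv1
  have hbr : ehat + α * (β - 1) * (p - r) ≤ p := by
    have hkey2 : 0 < (α + β - α * β ^ 2) * (p - r) :=
      mul_pos (by linarith) (by linarith)
    have h7 : (p - ehat - α * (β - 1) * (p - r)) * (1 + β)
        = (α + β - α * β ^ 2) * (p - r) := by linear_combination hpe
    nlinarith [hkey2, h7, h1β]
  -- image
  have himg : T '' Set.Icc ehat p = Set.Icc (T p) ehat := by
    ext y
    constructor
    · rintro ⟨x, ⟨hx1, hx2⟩, rfl⟩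
      have hxr : r ≤ x := le_trans (le_of_lt hre) hx1
      rw [hT2 x hxr, hTp]
      have h8 : 0 ≤ β * (p - x) := mul_nonneg (le_of_lt hβ0) (by linarith)
      have h9 : 0 ≤ β * (x - ehat) := mul_nonneg (le_of_lt hβ0) (by linarith)
      exact ⟨by linarith, by linarith [hfixeq]⟩
    · rintro ⟨hy1, hy2⟩
      refine ⟨r + (p - y) / β, ⟨?_, ?_⟩, ?_⟩
      · rw [← sub_nonneg]
        have h10 : r + (p - y) / β - ehat = ((p - y) - (ehat - r) * β) / β := by
          field_simp; ring
        rw [h10]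
        apply div_nonneg _ (le_of_lt hβ0)
        linarith [hfixeq]
      · rw [← sub_nonneg]
        have h11 : p - (r + (p - y) / β) = ((p - r) * β - (p - y)) / β := by
          field_simp; ring
        rw [h11]
        apply div_nonneg _ (le_of_lt hβ0)
        rw [hTp] at hy1
        linarith
      · have hxr : r + (p - y) / β ≥ r := by
          have : (0:ℝ) ≤ (p - y) / β :=
            div_nonneg (by linarith) (le_of_lt hβ0)
          linarith
        rw [hT2 _ hxr]; field_simp; ring
  refine ⟨himg, ?_, ?_, v, ⟨hev, hvp⟩, hTv, ?_, ?_⟩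
  · rw [himg]
    ext y
    simp only [Set.mem_inter_iff, Set.mem_Icc, Set.mem_singleton_iff]
    constructor
    · rintro ⟨⟨_, h1⟩, ⟨h2, _⟩⟩; linarith
    · rintro rfl
      have hTpr : T p < r := by rw [hTp]; nlinarith
      exact ⟨⟨by linarith, le_rfl⟩, ⟨le_rfl, le_of_lt hep⟩⟩
  · rintro x ⟨hx1, hx2⟩
    simp only [Set.mem_Icc]
    rcases le_total x v with h | h
    · rw [hB1 x ⟨hx1, h⟩]
      have hvp2 : ehat + β ^ 2 * (v - ehat) = p := by
        have h3 := hB1 v ⟨le_of_lt hev, le_rfl⟩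
        rw [hTv, hTr] at h3
        linarith
      have hb2 : (0:ℝ) ≤ β ^ 2 := sq_nonneg β
      constructor
      · nlinarith [mul_nonneg hb2 (sub_nonneg.2 hx1)]
      · nlinarith [mul_nonneg hb2 (sub_nonneg.2 h), hvp2]
    · rw [hB2 x ⟨h, hx2⟩]
      have hab : (0:ℝ) ≤ α * β := le_of_lt (mul_pos hα0 hβ0)
      constructor
      · have h4 : 0 ≤ α * β * (p - x) := mul_nonneg hab (by linarith)
        nlinarith [hstep, hbr, h4]
      · nlinarith [mul_nonneg hab (sub_nonneg.2 h)]
  · intro x hx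
    rw [hB1 x hx, hTehat, hTehat]
  · intro x hx
    rw [hB2 x hx, hTv, hTr]
end

section
/- Let c < d be reals and F : [c,d] → [c,d] be continuous. Suppose that for every closed interval [a,b] ⊆ [c,d] with a < b there exists n > 0 such that Fⁿ([a,b]) = [c,d]. Then [c,d] is a chaotic invariant set for F: periodic points of F are dense in [c,d], F has sensitive dependence on initial conditions on [c,d] (there exists b₀ > 0 such that for every x ∈ [c,d] and ε > 0 there exist y ∈ [c,d] with |x − y| < ε and k ∈ ℕ with |F^k(x) − F^k(y)| > b₀), and some point of [c,d] has a dense forward orbit in [c,d]. -/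
open Set

-- shrink lemma
lemma shrink_aux {c d : ℝ} {F : ℝ → ℝ}
    (hcont : ContinuousOn F (Set.Icc c d))
    (hmaps : Set.MapsTo F (Set.Icc c d) (Set.Icc c d))
    (hexp : ∀ a b : ℝ, c ≤ a → a < b → b ≤ d →
      ∃ n : ℕ, 0 < n ∧ F^[n] '' Set.Icc a b = Set.Icc c d)
    {a b t1 t2 : ℝ} (ha : c ≤ a) (hab : a < b) (hb : b ≤ d)
    (ht1 : c ≤ t1) (ht : t1 < t2) (ht2 : t2 ≤ d) :
    ∃ a' b', a ≤ a' ∧ a' < b' ∧ b' ≤ b ∧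
      ∃ n : ℕ, F^[n] '' Set.Icc a' b' ⊆ Set.Icc t1 t2 := by
  obtain ⟨n, -, him⟩ := hexp a b ha hab hb
  set g := F^[n] with hg
  have hgc : ContinuousOn g (Set.Icc a b) :=
    (hcont.iterate hmaps n).mono (Set.Icc_subset_Icc ha hb)
  set m := (t1 + t2) / 2 with hm
  have hmem : m ∈ Set.Icc c d := ⟨ht1.trans (by linarith), le_trans (by linarith) ht2⟩
  rw [← him] at hmem
  obtain ⟨w, hw, hgw⟩ := hmem
  have hcw : ContinuousWithinAt g (Set.Icc a b) w := hgc w hw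
  rw [Metric.continuousWithinAt_iff] at hcw
  obtain ⟨δ, hδ, hball⟩ := hcw ((t2 - t1) / 2) (by linarith)
  refine ⟨max a (w - δ/2), min b (w + δ/2), le_max_left _ _, ?_, min_le_left _ _, n, ?_⟩
  · rw [lt_min_iff, max_lt_iff, max_lt_iff]
    obtain ⟨hw1, hw2⟩ := hw
    exact ⟨⟨hab, by linarith⟩, ⟨by linarith, by linarith⟩⟩
  · rintro _ ⟨y, hy, rfl⟩
    have hy1 : y ∈ Set.Icc a b :=
      ⟨(le_max_left _ _).trans hy.1, hy.2.trans (min_le_left _ _)⟩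
    have hdist : dist y w < δ := by
      rw [Real.dist_eq, abs_lt]
      constructor
      · have := hy.1; have h2 := le_max_right a (w - δ/2); linarith [le_trans h2 hy.1]
      · have := hy.2.trans (min_le_right b (w + δ/2)); linarith
    have := hball hy1 hdist
    rw [hgw, Real.dist_eq, abs_lt] at this
    rw [hm] at this
    exact ⟨by linarith [this.1, this.2], by linarith [this.1, this.2]⟩

open Denumerable in
lemma dense_orbit
    (c d : ℝ) (F : ℝ → ℝ) (hcd : c < d)
    (hcont : ContinuousOn F (Set.Icc c d))
    (hmaps : Set.MapsTo F (Set.Icc c d) (Set.Icc c d))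
    (hexp : ∀ a b : ℝ, c ≤ a → a < b → b ≤ d →
      ∃ n : ℕ, 0 < n ∧ F^[n] '' Set.Icc a b = Set.Icc c d) :
    ∃ z ∈ Set.Icc c d, ∀ x ∈ Set.Icc c d, ∀ ε > 0, ∃ n : ℕ, |F^[n] z - x| < ε := by
  classical
  -- target intervals indexed by ℕ via pairs of rationals
  set e : ℕ → ℚ × ℚ := fun k => (Denumerable.eqv (ℚ × ℚ)).symm k with hedef
  have hsurj : Function.Surjective e := (Denumerable.eqv (ℚ × ℚ)).symm.surjective
  set T : ℕ → ℝ × ℝ := fun k =>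
    if c ≤ ((e k).1 : ℝ) ∧ ((e k).1 : ℝ) < ((e k).2 : ℝ) ∧ ((e k).2 : ℝ) ≤ d
    then (((e k).1 : ℝ), ((e k).2 : ℝ)) else (c, d) with hTdef
  have hT : ∀ k, c ≤ (T k).1 ∧ (T k).1 < (T k).2 ∧ (T k).2 ≤ d := by
    intro k
    simp only [hTdef]
    split
    · next h => exact h
    · exact ⟨le_refl c, hcd, le_refl d⟩
  have key : ∀ (k : ℕ) (p : ℝ × ℝ), ∃ q : ℝ × ℝ,
      (c ≤ p.1 ∧ p.1 < p.2 ∧ p.2 ≤ d) →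
      ((c ≤ q.1 ∧ q.1 < q.2 ∧ q.2 ≤ d) ∧ p.1 ≤ q.1 ∧ q.2 ≤ p.2 ∧
        ∃ n : ℕ, F^[n] '' Set.Icc q.1 q.2 ⊆ Set.Icc (T k).1 (T k).2) := by
    intro k p
    by_cases hp : c ≤ p.1 ∧ p.1 < p.2 ∧ p.2 ≤ d
    · obtain ⟨a', b', h1, h2, h3, n, h4⟩ :=
        shrink_aux hcont hmaps hexp hp.1 hp.2.1 hp.2.2 (hT k).1 (hT k).2.1 (hT k).2.2
      exact ⟨(a', b'), fun _ =>
        ⟨⟨hp.1.trans h1, h2, h3.trans hp.2.2⟩, h1, h3, n, h4⟩⟩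
    · exact ⟨p, fun h => absurd h hp⟩
  choose step hstep using key
  set S : ℕ → ℝ × ℝ := fun k => Nat.rec (c, d) (fun k ih => step k ih) k with hSdef
  have hS0 : S 0 = (c, d) := rfl
  have hSsucc : ∀ k, S (k + 1) = step k (S k) := fun k => rfl
  have inv : ∀ k, c ≤ (S k).1 ∧ (S k).1 < (S k).2 ∧ (S k).2 ≤ d := by
    intro k
    induction k with
    | zero => exact ⟨le_refl c, hcd, le_refl d⟩
    | succ k ih =>
      rw [hSsucc]
      exact (hstep k (S k) ih).1
  have nest : ∀ k, (S k).1 ≤ (S (k+1)).1 ∧ (S (k+1)).2 ≤ (S k).2 := by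
    intro k
    have := hstep k (S k) (inv k)
    rw [hSsucc]
    exact ⟨this.2.1, this.2.2.1⟩
  have monoA : Monotone (fun k => (S k).1) :=
    monotone_nat_of_le_succ (fun k => (nest k).1)
  have antiB : Antitone (fun k => (S k).2) :=
    antitone_nat_of_succ_le (fun k => (nest k).2)
  have cross : ∀ k j, (S k).1 ≤ (S j).2 := by
    intro k j
    rcases le_total k j with h | h
    · exact (monoA h).trans (inv j).2.1.le
    · exact (inv k).2.1.le.trans (antiB h)
  set z := sSup (Set.range (fun k => (S k).1)) with hz
  have hbdd : BddAbove (Set.range (fun k => (S k).1)) :=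
    ⟨d, by rintro _ ⟨k, rfl⟩; exact ((inv k).2.1.le.trans (inv k).2.2)⟩
  have hAz : ∀ k, (S k).1 ≤ z := fun k => le_csSup hbdd ⟨k, rfl⟩
  have hzB : ∀ k, z ≤ (S k).2 := fun k =>
    csSup_le ⟨c, ⟨0, rfl⟩⟩ (by rintro _ ⟨j, rfl⟩; exact cross j k)
  have hzI : z ∈ Set.Icc c d := ⟨(inv 0).1.trans (hAz 0), (hzB 0).trans (inv 0).2.2⟩
  have hit : ∀ k, ∃ n : ℕ, F^[n] z ∈ Set.Icc (T k).1 (T k).2 := by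
    intro k
    obtain ⟨n, hn⟩ := (hstep k (S k) (inv k)).2.2.2
    refine ⟨n, hn ⟨z, ⟨?_, ?_⟩, rfl⟩⟩
    · have := hAz (k+1); rwa [hSsucc] at this
    · have := hzB (k+1); rwa [hSsucc] at this
  refine ⟨z, hzI, ?_⟩
  intro x hx ε hε
  set l := max c (x - ε/2) with hl
  set r := min d (x + ε/2) with hr
  have hlr : l < r := by
    rw [hl, hr, lt_min_iff, max_lt_iff, max_lt_iff]
    obtain ⟨h1, h2⟩ := hx
    exact ⟨⟨hcd, by linarith⟩, ⟨by linarith, by linarith⟩⟩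
  obtain ⟨q1, hq1⟩ := exists_rat_btwn hlr
  obtain ⟨q2, hq2⟩ := exists_rat_btwn hq1.2
  obtain ⟨k, hke⟩ := hsurj (q1, q2)
  have hcl : c ≤ l := le_max_left _ _
  have hrd : r ≤ d := min_le_left _ _
  have hTk : T k = ((q1 : ℝ), (q2 : ℝ)) := by
    simp only [hTdef, hke]
    exact if_pos ⟨hcl.trans hq1.1.le, hq2.1, hq2.2.le.trans hrd⟩
  obtain ⟨n, hn⟩ := hit k
  rw [hTk] at hn
  refine ⟨n, ?_⟩
  have h1 : x - ε/2 ≤ l := le_max_right _ _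
  have h2 : r ≤ x + ε/2 := min_le_right _ _
  rw [abs_lt]
  constructor
  · have := hq1.1.trans_le hn.1; linarith
  · have := hn.2.trans_lt hq2.2; linarith


theorem parts12
    (c d : ℝ) (F : ℝ → ℝ) (hcd : c < d)
    (hcont : ContinuousOn F (Set.Icc c d))
    (hmaps : Set.MapsTo F (Set.Icc c d) (Set.Icc c d))
    (hexp : ∀ a b : ℝ, c ≤ a → a < b → b ≤ d →
      ∃ n : ℕ, 0 < n ∧ F^[n] '' Set.Icc a b = Set.Icc c d) :
    (∀ x ∈ Set.Icc c d, ∀ ε > 0, ∃ y ∈ Set.Icc c d, |x - y| < ε ∧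
      ∃ n, 1 ≤ n ∧ F^[n] y = y) ∧
    (∃ b₀ > 0, ∀ x ∈ Set.Icc c d, ∀ ε > 0, ∃ y ∈ Set.Icc c d, |x - y| < ε ∧
      ∃ k : ℕ, b₀ < |F^[k] x - F^[k] y|) := by
  have interval : ∀ x ∈ Set.Icc c d, ∀ ε : ℝ, 0 < ε →
      ∃ a b : ℝ, c ≤ a ∧ a < b ∧ b ≤ d ∧ a ≤ x ∧ x ≤ b ∧ b - a < ε := by
    intro x hx ε hε
    refine ⟨max c (x - ε/4), min d (x + ε/4), le_max_left _ _, ?_,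
      min_le_left _ _, ?_, ?_, ?_⟩
    · rw [lt_min_iff, max_lt_iff, max_lt_iff]
      obtain ⟨h1, h2⟩ := hx
      exact ⟨⟨hcd, by linarith⟩, ⟨by linarith, by linarith⟩⟩
    · exact max_le hx.1 (by linarith)
    · exact le_min hx.2 (by linarith)
    · have h1 := le_max_right c (x - ε/4)
      have h2 := min_le_right d (x + ε/4)
      linarith
  constructor
  · -- dense periodic points
    intro x hx ε hε
    obtain ⟨a, b, ha, hab, hb, hax, hxb, hba⟩ := interval x hx ε hε
    obtain ⟨n, hn, him⟩ := hexp a b ha hab hb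
    have hgc : ContinuousOn (F^[n]) (Set.Icc a b) :=
      (hcont.iterate hmaps n).mono (Set.Icc_subset_Icc ha hb)
    have hcmem : c ∈ F^[n] '' Set.Icc a b := him ▸ Set.left_mem_Icc.2 hcd.le
    have hdmem : d ∈ F^[n] '' Set.Icc a b := him ▸ Set.right_mem_Icc.2 hcd.le
    obtain ⟨u, hu, hgu⟩ := hcmem
    obtain ⟨v, hv, hgv⟩ := hdmem
    have hcsub : Set.uIcc u v ⊆ Set.Icc a b := Set.uIcc_subset_Icc hu hv
    have hcont2 : ContinuousOn (fun t => F^[n] t - t) (Set.uIcc u v) :=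
      (hgc.mono hcsub).sub continuousOn_id
    have hiv : (0:ℝ) ∈ Set.uIcc (F^[n] u - u) (F^[n] v - v) := by
      rw [Set.mem_uIcc]
      left
      constructor
      · rw [hgu]; linarith [hu.1]
      · rw [hgv]; linarith [hv.2]
    obtain ⟨y, hy, hfy⟩ := intermediate_value_uIcc hcont2 hiv
    have hyab : y ∈ Set.Icc a b := hcsub hy
    have hyfix : F^[n] y = y := by
      have : F^[n] y - y = 0 := hfy
      linarith
    refine ⟨y, Set.Icc_subset_Icc ha hb hyab, ?_, n, hn, hyfix⟩
    rw [abs_lt]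
    constructor <;> [linarith [hyab.2]; linarith [hyab.1]]
  · -- sensitivity
    refine ⟨(d - c)/4, by linarith, ?_⟩
    intro x hx ε hε
    obtain ⟨a, b, ha, hab, hb, hax, hxb, hba⟩ := interval x hx ε hε
    obtain ⟨n, hn, him⟩ := hexp a b ha hab hb
    have hxmem : F^[n] x ∈ Set.Icc c d := by
      rw [← him]; exact ⟨x, ⟨hax, hxb⟩, rfl⟩
    have hcmem : c ∈ F^[n] '' Set.Icc a b := him ▸ Set.left_mem_Icc.2 hcd.le
    have hdmem : d ∈ F^[n] '' Set.Icc a b := him ▸ Set.right_mem_Icc.2 hcd.le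
    obtain ⟨u, hu, hgu⟩ := hcmem
    obtain ⟨v, hv, hgv⟩ := hdmem
    rcases le_total ((c + d)/2) (F^[n] x) with h | h
    · refine ⟨u, Set.Icc_subset_Icc ha hb hu, ?_, n, ?_⟩
      · rw [abs_lt]; constructor <;> [linarith [hu.2]; linarith [hu.1]]
      · rw [hgu]
        have h1 := hxmem.1
        rw [abs_of_nonneg (by linarith : (0:ℝ) ≤ F^[n] x - c)]
        linarith
    · refine ⟨v, Set.Icc_subset_Icc ha hb hv, ?_, n, ?_⟩
      · rw [abs_lt]; constructor <;> [linarith [hv.2]; linarith [hv.1]]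
      · rw [hgv]
        have h2 := hxmem.2
        rw [abs_of_nonpos (by linarith : F^[n] x - d ≤ 0)]
        linarith


/-- If `F : [c, d] → [c, d]` is continuous and every nondegenerate closed subinterval of
`[c, d]` is mapped onto `[c, d]` by some iterate of `F`, then `[c, d]` is a chaotic
invariant set for `F`: periodic points are dense, `F` has sensitive dependence on initial
conditions on `[c, d]`, and some point has a dense forward orbit. -/
theorem chaos_from_locally_eventually_onto
    (c d : ℝ) (F : ℝ → ℝ) (hcd : c < d)
    (hcont : ContinuousOn F (Set.Icc c d))
    (hmaps : Set.MapsTo F (Set.Icc c d) (Set.Icc c d))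
    (hexp : ∀ a b : ℝ, c ≤ a → a < b → b ≤ d →
      ∃ n : ℕ, 0 < n ∧ F^[n] '' Set.Icc a b = Set.Icc c d) :
    (∀ x ∈ Set.Icc c d, ∀ ε > 0, ∃ y ∈ Set.Icc c d, |x - y| < ε ∧
      ∃ n, 1 ≤ n ∧ F^[n] y = y) ∧
    (∃ b₀ > 0, ∀ x ∈ Set.Icc c d, ∀ ε > 0, ∃ y ∈ Set.Icc c d, |x - y| < ε ∧
      ∃ k : ℕ, b₀ < |F^[k] x - F^[k] y|) ∧
    (∃ z ∈ Set.Icc c d, ∀ x ∈ Set.Icc c d, ∀ ε > 0, ∃ n : ℕ, |F^[n] z - x| < ε) := by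
  obtain ⟨h1, h2⟩ := parts12 c d F hcd hcont hmaps hexp
  exact ⟨h1, h2, dense_orbit c d F hcd hcont hmaps hexp⟩
end

section
/- Under the saw map setup, every trajectory enters the union of the invariant segments after finitely many iterations: for every x ∈ J = [0, r_0] there exists n ∈ ℕ such that Tⁿ(x) ∈ J* ∪ J_1 ∪ J_2 ∪ ... ∪ J_{k*}. -/
/-- If an affine map is below the identity at both endpoints, it is below on the segment. -/
lemma aff_neg_of_neg_neg {m c a b x : ℝ} (h₁ : m * a + c < a) (h₂ : m * b + c < b)
    (hx1 : a ≤ x) (hx2 : x ≤ b) : m * x + c < x := by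
  rcases le_or_gt m 1 with h | h
  · nlinarith [mul_nonneg (by linarith : (0:ℝ) ≤ 1 - m) (by linarith : (0:ℝ) ≤ x - a)]
  · nlinarith [mul_nonneg (by linarith : (0:ℝ) ≤ m - 1) (by linarith : (0:ℝ) ≤ b - x)]

/-- Variant: strictly below at the left end, at most the identity at the right end,
strictly below on the half-open segment. -/
lemma aff_neg_of_neg_nonpos {m c a b x : ℝ} (h₁ : m * a + c < a) (h₂ : m * b + c ≤ b)
    (hx1 : a ≤ x) (hx2 : x < b) : m * x + c < x := by
  rcases le_or_gt m 1 with h | h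
  · nlinarith [mul_nonneg (by linarith : (0:ℝ) ≤ 1 - m) (by linarith : (0:ℝ) ≤ x - a)]
  · nlinarith [mul_pos (by linarith : (0:ℝ) < m - 1) (by linarith : (0:ℝ) < b - x)]

/-- An affine map on a segment is bounded by any bound valid at both endpoints. -/
lemma aff_le_bound {m c a b x P : ℝ} (h₁ : m * a + c ≤ P) (h₂ : m * b + c ≤ P)
    (hx1 : a ≤ x) (hx2 : x ≤ b) : m * x + c ≤ P := by
  rcases le_or_gt 0 m with h | h
  · nlinarith [mul_nonneg h (by linarith : (0:ℝ) ≤ b - x)]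
  · nlinarith [mul_nonneg (by linarith : (0:ℝ) ≤ -m) (by linarith : (0:ℝ) ≤ x - a)]

namespace SawMapSetup

/-- Locating a point of `[q (K+1), r 0)` in one of the branch intervals. -/
lemma locate (S : SawMapSetup) :
    ∀ (K : ℕ) (y : ℝ), y ∈ Set.Ico (S.q (K + 1)) (S.r 0) →
      y ∈ Set.Ico (S.q 1) (S.r 0) ∨
        ∃ k, 1 ≤ k ∧ k ≤ K ∧
          (y ∈ Set.Ico (S.q (k + 1)) (S.r k) ∨ y ∈ Set.Ico (S.r k) (S.q k)) := by
  intro K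
  induction K with
  | zero => intro y hy; exact Or.inl hy
  | succ K ih =>
    intro y hy
    rcases lt_or_ge y (S.r (K + 1)) with h | h
    · exact Or.inr ⟨K + 1, by omega, le_refl _, Or.inl ⟨hy.1, h⟩⟩
    rcases lt_or_ge y (S.q (K + 1)) with h2 | h2
    · exact Or.inr ⟨K + 1, by omega, le_refl _, Or.inr ⟨h, h2⟩⟩
    · rcases ih y ⟨h2, hy.2⟩ with h3 | ⟨k, hk1, hk2, hk3⟩
      · exact Or.inl h3
      · exact Or.inr ⟨k, hk1, by omega, hk3⟩

/-- Outside the union of the invariant segments, `T` is strictly below the identity. -/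
lemma T_lt_self (S : SawMapSetup) {y : ℝ} (hy0 : 0 ≤ y) (hy1 : y ≤ S.r 0)
    (hyU : y ∉ S.Jstar ∪ ⋃ k ∈ Set.Icc 1 S.kstar, S.Jk k) : S.T y < y := by
  have hnJs : y ∉ S.Jstar := fun h => hyU (Or.inl h)
  have hygt : S.p S.kstar < y := by
    by_contra h; push_neg at h; exact hnJs ⟨hy0, h⟩
  have hJk : ∀ k, 1 ≤ k → k ≤ S.kstar → y ∉ S.Jk k := by
    intro k h1 h2 hmem
    exact hyU (Or.inr (Set.mem_biUnion (⟨h1, h2⟩ : k ∈ Set.Icc 1 S.kstar) hmem))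
  rcases eq_or_lt_of_le hy1 with heq | hylt
  · rw [heq, S.hTr 0]; exact S.hp0r0
  · have hmem : y ∈ Set.Ico (S.q (S.kstar + 1)) (S.r 0) :=
      ⟨le_of_lt (lt_trans (lt_trans (S.hqr _ S.hkstar) (S.hpr _ S.hkstar)) hygt), hylt⟩
    rcases S.locate S.kstar y hmem with hcase | ⟨k, hk1, hk2, hcase | hcase⟩
    · obtain ⟨m, c, haff⟩ := S.haff0
      have e1 : m * S.q 1 + c = 0 := by
        rw [← haff _ ⟨le_refl _, S.hq1r0.le⟩]; exact S.hTq 1 le_rfl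
      have e2 : m * S.r 0 + c = S.p 0 := by
        rw [← haff _ ⟨S.hq1r0.le, le_refl _⟩]; exact S.hTr 0
      have h1 : m * S.q 1 + c < S.q 1 := by rw [e1]; exact S.hq_pos 1 le_rfl
      have h2 : m * S.r 0 + c < S.r 0 := by rw [e2]; exact S.hp0r0
      rw [haff y ⟨hcase.1, hcase.2.le⟩]
      exact aff_neg_of_neg_neg h1 h2 hcase.1 hcase.2.le
    · obtain ⟨m, c, haff⟩ := S.haff1 k hk1
      obtain ⟨he1, he2⟩ := S.he_mem k hk1
      rcases lt_or_ge y (S.e k) with hye | hye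
      · have e1 : m * S.q (k + 1) + c = 0 := by
          rw [← haff _ ⟨le_refl _, (S.hqr k hk1).le⟩]; exact S.hTq (k + 1) (by omega)
        have e2 : m * S.e k + c = S.e k := by
          rw [← haff _ ⟨he1.le, he2.le⟩]; exact S.he_fix k hk1
        have h1 : m * S.q (k + 1) + c < S.q (k + 1) := by
          rw [e1]; exact S.hq_pos (k + 1) (by omega)
        rw [haff y ⟨hcase.1, hcase.2.le⟩]
        exact aff_neg_of_neg_nonpos h1 (le_of_eq e2) hcase.1 hye
      · exact absurd ⟨hye, le_trans hcase.2.le (S.hpr k hk1).le⟩ (hJk k hk1 hk2)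
    · obtain ⟨m, c, haff⟩ := S.haff2 k hk1
      have hrq := S.hrq k hk1
      rcases le_or_gt y (S.p k) with hyp | hyp
      · exact absurd ⟨le_trans (S.he_mem k hk1).2.le hcase.1, hyp⟩ (hJk k hk1 hk2)
      · have e1 : m * S.r k + c = S.p k := by
          rw [← haff _ ⟨le_refl _, hrq.le⟩]; exact S.hTr k
        have e2 : m * S.q k + c = 0 := by
          rw [← haff _ ⟨hrq.le, le_refl _⟩]; exact S.hTq k hk1
        have hle : m * y + c ≤ S.p k :=
          aff_le_bound (le_of_eq e1) (by rw [e2]; exact (S.hp_pos k).le) hcase.1 hcase.2.le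
        rw [haff y ⟨hcase.1, hcase.2.le⟩]
        linarith

end SawMapSetup

/-- Under the saw map setup, every trajectory enters the union
`J* ∪ J_1 ∪ ⋯ ∪ J_{kstar}` of the invariant segments after finitely many iterations. -/
theorem eventually_in_union (S : SawMapSetup) :
    ∀ x ∈ Set.Icc 0 (S.r 0),
      ∃ n : ℕ, S.T^[n] x ∈ S.Jstar ∪ ⋃ k ∈ Set.Icc 1 S.kstar, S.Jk k := by
  intro x hx
  by_contra hcon
  push_neg at hcon
  set f : ℕ → ℝ := fun n => S.T^[n] x with hfdef
  have hfJ : ∀ n, f n ∈ Set.Icc 0 (S.r 0) := by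
    intro n
    induction n with
    | zero => simpa [hfdef] using hx
    | succ n ih =>
      have hstep : f (n + 1) = S.T (f n) := by
        simp [hfdef, Function.iterate_succ_apply']
      rw [hstep]; exact S.hTJ ih
  have hnot : ∀ n, f n ∉ S.Jstar ∪ ⋃ k ∈ Set.Icc 1 S.kstar, S.Jk k := hcon
  have hdec : ∀ n, f (n + 1) < f n := by
    intro n
    have hstep : f (n + 1) = S.T (f n) := by
      simp [hfdef, Function.iterate_succ_apply']
    rw [hstep]
    exact S.T_lt_self (hfJ n).1 (hfJ n).2 (hnot n)
  have hanti : Antitone f := antitone_nat_of_succ_le fun n => (hdec n).le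
  have hbdd : BddBelow (Set.range f) := ⟨0, by rintro z ⟨n, rfl⟩; exact (hfJ n).1⟩
  have htend : Filter.Tendsto f Filter.atTop (nhds (⨅ n, f n)) :=
    tendsto_atTop_ciInf hanti hbdd
  set L := ⨅ n, f n with hLdef
  have hLle : ∀ n, L ≤ f n := fun n => ciInf_le hbdd n
  have hLlt : ∀ n, L < f n := fun n => lt_of_le_of_lt (hLle (n + 1)) (hdec n)
  have hgt : ∀ n, S.p S.kstar < f n := by
    intro n
    by_contra hle; push_neg at hle
    exact hnot n (Or.inl ⟨(hfJ n).1, hle⟩)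
  have hLp : S.p S.kstar ≤ L := le_ciInf fun n => (hgt n).le
  have hLr0 : L < S.r 0 := lt_of_lt_of_le (hLlt 0) (hfJ 0).2
  -- If `T` is affine on a branch `[a, b]` with `a ≤ L < b`, then `L` is fixed by the
  -- affine formula.
  have key : ∀ m c a b : ℝ, (∀ z ∈ Set.Icc a b, S.T z = m * z + c) → a ≤ L → L < b →
      m * L + c = L := by
    intro m c a b haff ha hb
    have hev : ∀ᶠ n in Filter.atTop, f n < b := htend.eventually_lt_const hb
    have heq : (fun n => f (n + 1)) =ᶠ[Filter.atTop] fun n => m * f n + c := by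
      filter_upwards [hev] with n hn
      have hstep : f (n + 1) = S.T (f n) := by
        simp [hfdef, Function.iterate_succ_apply']
      rw [hstep, haff (f n) ⟨le_trans ha (hLle n), hn.le⟩]
    have h1 : Filter.Tendsto (fun n => f (n + 1)) Filter.atTop (nhds L) :=
      htend.comp (Filter.tendsto_add_atTop_nat 1)
    have h2 : Filter.Tendsto (fun n => m * f n + c) Filter.atTop (nhds (m * L + c)) :=
      (htend.const_mul m).add_const c
    exact tendsto_nhds_unique (h2.congr' heq.symm) h1
  have hmemL : L ∈ Set.Ico (S.q (S.kstar + 1)) (S.r 0) :=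
    ⟨le_of_lt (lt_of_lt_of_le (lt_trans (S.hqr _ S.hkstar) (S.hpr _ S.hkstar)) hLp), hLr0⟩
  rcases S.locate S.kstar L hmemL with hcase | ⟨k, hk1, hk2, hcase | hcase⟩
  · -- branch [q 1, r 0] : no fixed point there
    obtain ⟨m, c, haff⟩ := S.haff0
    have hfix := key m c _ _ haff hcase.1 hcase.2
    have e1 : m * S.q 1 + c = 0 := by
      rw [← haff _ ⟨le_refl _, S.hq1r0.le⟩]; exact S.hTq 1 le_rfl
    have e2 : m * S.r 0 + c = S.p 0 := by
      rw [← haff _ ⟨S.hq1r0.le, le_refl _⟩]; exact S.hTr 0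
    have h1 : m * S.q 1 + c < S.q 1 := by rw [e1]; exact S.hq_pos 1 le_rfl
    have h2 : m * S.r 0 + c < S.r 0 := by rw [e2]; exact S.hp0r0
    have := aff_neg_of_neg_neg h1 h2 hcase.1 hcase.2.le
    linarith
  · -- increasing branch [q (k+1), r k] : the fixed point is `e k`, repelling from above
    obtain ⟨m, c, haff⟩ := S.haff1 k hk1
    have hfix := key m c _ _ haff hcase.1 hcase.2
    obtain ⟨he1, he2⟩ := S.he_mem k hk1
    have hTL : S.T L = L := by rw [haff L ⟨hcase.1, hcase.2.le⟩]; exact hfix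
    have hLq : S.q (k + 1) < L := by
      rcases eq_or_lt_of_le hcase.1 with heq2 | h
      · exfalso
        have h0 : S.T L = 0 := by rw [← heq2]; exact S.hTq (k + 1) (by omega)
        rw [hTL] at h0
        have := S.hp_pos S.kstar
        linarith
      · exact h
    have hLe : L = S.e k := S.he_uniq k hk1 L ⟨hLq, hcase.2⟩ hTL
    obtain ⟨n, hn⟩ := (htend.eventually_lt_const hcase.2).exists
    apply hnot n
    right
    refine Set.mem_biUnion (⟨hk1, hk2⟩ : k ∈ Set.Icc 1 S.kstar) ?_
    exact ⟨by rw [← hLe]; exact (hLlt n).le, le_trans hn.le (S.hpr k hk1).le⟩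
  · -- decreasing branch [r k, q k] : the fixed point is repelling from above
    obtain ⟨m, c, haff⟩ := S.haff2 k hk1
    have hrq := S.hrq k hk1
    have hfix := key m c _ _ haff hcase.1 hcase.2
    have e1 : m * S.r k + c = S.p k := by
      rw [← haff _ ⟨le_refl _, hrq.le⟩]; exact S.hTr k
    have e2 : m * S.q k + c = 0 := by
      rw [← haff _ ⟨hrq.le, le_refl _⟩]; exact S.hTq k hk1
    have hm : m < 0 := by
      by_contra h; push_neg at h
      have : m * S.r k ≤ m * S.q k := mul_le_mul_of_nonneg_left hrq.le h
      have := S.hp_pos k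
      linarith
    obtain ⟨n, hn⟩ := (htend.eventually_lt_const hcase.2).exists
    have hstep : f (n + 1) = m * f n + c := by
      have h1 : f (n + 1) = S.T (f n) := by
        simp [hfdef, Function.iterate_succ_apply']
      rw [h1, haff (f n) ⟨le_trans hcase.1 (hLle n), hn.le⟩]
    have hlt : m * f n + c < m * L + c := by
      have := mul_lt_mul_of_neg_left (hLlt n) hm
      linarith
    have h4 : f (n + 1) < L := by rw [hstep]; linarith
    linarith [hLlt (n + 1)]
end
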